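/- arXiv:2012.14966 — 6 statements merged into one kernel-verified Lean document; each statement's English description precedes it below -/
import Mathlib

section
/- Let n be a power of 2 and let P be an n × n permutation matrix over ℂ. Then P ∈ BB*; that is, there exist butterfly matrices M1, M2 of size n such that P = M1 · M2*. -/
noncomputable section

open Matrix

/-- A butterfly factor matrix of size `n` with block size `k`: a block-diagonal matrix
whose `n/k` diagonal blocks are butterfly factors of size `k`, i.e. `k × k` matrices of
the block form `[[D1, D2], [D3, D4]]` with each `Dᵢ` a `(k/2) × (k/2)` diagonal matrix.
Equivalently, nonzero entries may occur only at positions `(i, j)` lying in the same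
diagonal `k × k` block and with `i ≡ j (mod k/2)`. -/
def IsButterflyFactorMatrix (n k : ℕ) (B : Matrix (Fin n) (Fin n) ℂ) : Prop :=
  2 ≤ k ∧ k ∣ n ∧
    ∀ i j : Fin n, B i j ≠ 0 →
      i.val / k = j.val / k ∧ i.val % (k / 2) = j.val % (k / 2)

/-- A butterfly matrix of size `n = 2^b`: a product `B_n · B_{n/2} · ⋯ · B_2` where `B_k`
is a butterfly factor matrix of size `n` with block size `k`. -/
def IsButterflyMatrix (n : ℕ) (M : Matrix (Fin n) (Fin n) ℂ) : Prop :=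
  ∃ b : ℕ, n = 2 ^ b ∧
    ∃ B : ℕ → Matrix (Fin n) (Fin n) ℂ,
      (∀ t, 1 ≤ t → t ≤ b → IsButterflyFactorMatrix n (2 ^ t) (B t)) ∧
      M = (List.ofFn fun t : Fin b => B (b - t.val)).prod

/-- `M ∈ BB*`: `M = M1 · M2ᴴ` with `M1`, `M2` butterfly matrices. -/
def InBBStar (n : ℕ) (M : Matrix (Fin n) (Fin n) ℂ) : Prop :=
  ∃ M1 M2 : Matrix (Fin n) (Fin n) ℂ,
    IsButterflyMatrix n M1 ∧ IsButterflyMatrix n M2 ∧ M = M1 * M2ᴴ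

/-- `M ∈ (BB*)^w`: `M` is a product of `w` matrices each in `BB*`. -/
def InBBStarPow (n w : ℕ) (M : Matrix (Fin n) (Fin n) ℂ) : Prop :=
  ∃ f : Fin w → Matrix (Fin n) (Fin n) ℂ,
    (∀ i, InBBStar n (f i)) ∧ M = (List.ofFn f).prod

/-- `M ∈ (BB*)^w_e`: `M` (of size `n × n`) is the upper-left `n × n` corner of an
`en × en` matrix `E ∈ (BB*)^w`. -/
def InBBStarPowExp (n w e : ℕ) (M : Matrix (Fin n) (Fin n) ℂ) : Prop :=
  ∃ E : Matrix (Fin (e * n)) (Fin (e * n)) ℂ,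
    InBBStarPow (e * n) w E ∧
    ∀ (i j : Fin n) (hi : i.val < e * n) (hj : j.val < e * n),
      M i j = E ⟨i.val, hi⟩ ⟨j.val, hj⟩

/-- `P` is a permutation matrix. -/
def IsPermutationMatrix (n : ℕ) (P : Matrix (Fin n) (Fin n) ℂ) : Prop :=
  ∃ σ : Equiv.Perm (Fin n), ∀ i j, P i j = if i = σ j then 1 else 0

/-- `M` (with at most one nonzero entry per column) meets the `s` balance condition:
partitioning the columns into consecutive chunks of size `s`, every chunk contains, for
each residue `0 ≤ m < s`, exactly one column whose nonzero entry lies in a row with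
index `≡ m (mod s)`. -/
def MeetsBalance (n s : ℕ) (M : Matrix (Fin n) (Fin n) ℂ) : Prop :=
  ∀ c < n / s, ∀ m < s,
    {j : Fin n | j.val / s = c ∧ ∃ i : Fin n, M i j ≠ 0 ∧ i.val % s = m}.ncard = 1

/-- `M` is modular-balanced: it meets the `2^j` balance condition for all `2 ≤ 2^j ≤ n`. -/
def ModularBalanced (n : ℕ) (M : Matrix (Fin n) (Fin n) ℂ) : Prop :=
  ∀ j : ℕ, 1 ≤ j → 2 ^ j ≤ n → MeetsBalance n (2 ^ j) M

/-- `H` is a horizontal step matrix: whenever `H[i,j] ≠ 0` and `H[i',j'] ≠ 0` with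
`j ≤ j'`, we have `j' - j ≥ (i' - i) mod n`. -/
def IsHorizontalStep (n : ℕ) (H : Matrix (Fin n) (Fin n) ℂ) : Prop :=
  ∀ i i' j j' : Fin n, j.val ≤ j'.val → H i j ≠ 0 → H i' j' ≠ 0 →
    ((i'.val : ℤ) - (i.val : ℤ)) % (n : ℤ) ≤ (j'.val : ℤ) - (j.val : ℤ)

/-- Reversal of the `b` low-order bits of `x`. -/
def bitRev (b x : ℕ) : ℕ :=
  (Finset.range b).sum fun t => x / 2 ^ t % 2 * 2 ^ (b - 1 - t)


section Aux

variable {α : Type*}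

private lemma perm_apply_inv_self (e : Equiv.Perm α) (x : α) : e (e⁻¹ x) = x :=
  Equiv.apply_symm_apply e x

private lemma perm_inv_apply_self (e : Equiv.Perm α) (x : α) : e⁻¹ (e x) = x :=
  Equiv.symm_apply_apply e x

private lemma conj_fpf (w c : Equiv.Perm α) (hw : ∀ x, w x ≠ x) (x : α) :
    (c * w * c⁻¹) x ≠ x := by
  intro h
  have h2 : w (c⁻¹ x) = c⁻¹ x := by
    have := congrArg (⇑c⁻¹) h
    simpa [Equiv.Perm.mul_apply] using this
  exact hw _ h2

private lemma inv_self (u : Equiv.Perm α) (hu2 : u * u = 1) : u⁻¹ = u := by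
  rw [eq_comm, eq_inv_iff_mul_eq_one]; exact hu2

private lemma uconj (u v : Equiv.Perm α) (hu2 : u * u = 1) (hv2 : v * v = 1) (s : ℤ) :
    u * (u * v) ^ s * u⁻¹ = (u * v) ^ (-s) := by
  have h1 : u * (u * v) * u⁻¹ = (u * v)⁻¹ := by
    have e1 : u * (u * v) * u⁻¹ = (u * u) * (v * u⁻¹) := by group
    rw [e1, hu2, _root_.one_mul, _root_.mul_inv_rev, inv_self u hu2, inv_self v hv2]
  have h2 := _root_.map_zpow (MulAut.conj u) (u * v) s
  simp only [MulAut.conj_apply] at h2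
  rw [h2, h1, _root_.inv_zpow, _root_.zpow_neg]

private lemma ug_shift (u v : Equiv.Perm α) (hu2 : u * u = 1) (hv2 : v * v = 1) (s : ℤ) :
    u * (u * v) ^ s = (u * v) ^ (-s) * u := by
  have := uconj u v hu2 hv2 s
  calc u * (u * v) ^ s = (u * (u * v) ^ s * u⁻¹) * u := by group
  _ = (u * v) ^ (-s) * u := by rw [this]

/-- key: `u * g^t` is fixed-point free for all `t`. -/
private lemma ugt_fpf (u v : Equiv.Perm α) (hu2 : u * u = 1) (hv2 : v * v = 1)
    (hu : ∀ x, u x ≠ x) (hv : ∀ x, v x ≠ x) (t : ℤ) (x : α) :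
    (u * (u * v) ^ t) x ≠ x := by
  set g := u * v with hg
  rcases Int.even_or_odd t with ⟨s, hs⟩ | ⟨s, hs⟩
  · have h1 : u * g ^ t = g ^ (-s) * (u * g ^ s) := by
      rw [hs]
      calc u * g ^ (s + s) = (u * g ^ s) * g ^ s := by rw [_root_.zpow_add]; group
      _ = ((g ^ (-s)) * u) * g ^ s := by rw [ug_shift u v hu2 hv2]
      _ = g ^ (-s) * (u * g ^ s) := by group
    have h2 : u * g ^ t = g ^ (-s) * u * (g ^ (-s))⁻¹ := by
      rw [h1]; simp [_root_.zpow_neg, mul_assoc]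
    rw [h2]; exact conj_fpf u (g ^ (-s)) hu x
  · have h1 : u * g ^ t = g ^ (-s) * v * (g ^ (-s))⁻¹ := by
      have e1 : u * g ^ t = (u * g ^ s) * (g * g ^ s) := by
        rw [hs]
        have : 2 * s + 1 = s + (1 + s) := by ring
        rw [this, _root_.zpow_add, _root_.zpow_add, _root_.zpow_one]; group
      rw [e1, ug_shift u v hu2 hv2 s]
      have e2 : u * g = v := by rw [hg, ← mul_assoc, hu2, _root_.one_mul]
      calc g ^ (-s) * u * (g * g ^ s) = g ^ (-s) * (u * g) * g ^ s := by group
      _ = g ^ (-s) * v * (g ^ (-s))⁻¹ := by rw [e2]; group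
    rw [h1]; exact conj_fpf v (g ^ (-s)) hv x

private lemma exists_coloring (u v : Equiv.Perm α) (hu2 : u * u = 1) (hv2 : v * v = 1)
    (hu : ∀ x, u x ≠ x) (hv : ∀ x, v x ≠ x) :
    ∃ h : α → Bool, (∀ x, h (u x) = ! h x) ∧ (∀ x, h (v x) = ! h x) := by
  classical
  set g := u * v with hg
  set H := Subgroup.closure ({u, v} : Set (Equiv.Perm α)) with hH
  -- the equivalence relation of being in the same ⟨u,v⟩-orbit
  let r : α → α → Prop := fun x y => ∃ w : Equiv.Perm α, w ∈ H ∧ w y = x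
  have requiv : Equivalence r := by
    constructor
    · exact fun x => ⟨1, one_mem H, rfl⟩
    · rintro x y ⟨w, hw, rfl⟩
      exact ⟨w⁻¹, inv_mem hw, by simp⟩
    · rintro x y z ⟨w, hw, rfl⟩ ⟨w', hw', rfl⟩
      exact ⟨w * w', mul_mem hw hw', rfl⟩
  let sd : Setoid α := ⟨r, requiv⟩
  let rep : α → α := fun x => (Quotient.mk sd x).out
  have hrep : ∀ x, ∃ w : Equiv.Perm α, w ∈ H ∧ w (rep x) = x := by
    intro x
    have h0 : r (rep x) x := Quotient.exact (Quotient.out_eq (Quotient.mk sd x))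
    exact requiv.symm h0
  have hrep_congr : ∀ (w : Equiv.Perm α) (x : α), w ∈ H → rep (w x) = rep x := by
    intro w x hw
    show (Quotient.mk sd (w x)).out = (Quotient.mk sd x).out
    congr 1
    exact Quotient.sound ⟨w, hw, rfl⟩
  have huH : u ∈ H := Subgroup.subset_closure (by simp)
  have hvH : v ∈ H := Subgroup.subset_closure (by simp)
  -- every element of H has the form g^k or u*g^k
  have hform : ∀ w ∈ H, ∃ k : ℤ, w = g ^ k ∨ w = u * g ^ k := by
    intro w hw
    induction hw using Subgroup.closure_induction with
    | mem w hw =>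
      rcases hw with rfl | rfl
      · exact ⟨0, Or.inr (by simp)⟩
      · refine ⟨1, Or.inr ?_⟩
        rw [_root_.zpow_one, hg, ← mul_assoc, hu2, _root_.one_mul]
    | one => exact ⟨0, Or.inl (by simp)⟩
    | mul a b _ _ ha hb =>
      obtain ⟨k, hk⟩ := ha
      obtain ⟨m, hm⟩ := hb
      rcases hk with rfl | rfl <;> rcases hm with rfl | rfl
      · exact ⟨k + m, Or.inl (_root_.zpow_add g k m).symm⟩
      · refine ⟨m - k, Or.inr ?_⟩
        calc g ^ k * (u * g ^ m) = (g ^ k * u) * g ^ m := by group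
        _ = (u * g ^ (-k)) * g ^ m := by
              rw [ug_shift u v hu2 hv2 (-k)]; simp [hg]
        _ = u * g ^ (m - k) := by rw [mul_assoc, ← _root_.zpow_add]; ring_nf
      · exact ⟨k + m, Or.inr (by rw [mul_assoc, ← _root_.zpow_add])⟩
      · refine ⟨m - k, Or.inl ?_⟩
        calc (u * g ^ k) * (u * g ^ m) = u * (g ^ k * u) * g ^ m := by group
        _ = u * (u * g ^ (-k)) * g ^ m := by rw [ug_shift u v hu2 hv2 (-k)]; simp [hg]
        _ = (u * u) * (g ^ (-k) * g ^ m) := by group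
        _ = g ^ (m - k) := by rw [hu2, _root_.one_mul, ← _root_.zpow_add]; ring_nf
    | inv a _ ha =>
      obtain ⟨k, hk⟩ := ha
      rcases hk with rfl | rfl
      · exact ⟨-k, Or.inl (by rw [← _root_.zpow_neg])⟩
      · refine ⟨k, Or.inr ?_⟩
        rw [_root_.mul_inv_rev, inv_self u hu2, ← _root_.zpow_neg]
        exact (ug_shift u v hu2 hv2 k).symm
  -- disjointness of the two forms at the representative
  have hdisj : ∀ x k m, ¬ ((g ^ (k : ℤ)) (rep x) = x ∧ (u * g ^ (m : ℤ)) (rep x) = x) := by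
    rintro x k m ⟨h1, h2⟩
    have h3 : (u * g ^ m) (rep x) = (g ^ k) (rep x) := by rw [h1, h2]
    have h4 : (g ^ (-k) * (u * g ^ m)) (rep x) = rep x := by
      have := congrArg (⇑(g ^ (-(k:ℤ)))) h3
      simpa [Equiv.Perm.mul_apply, _root_.zpow_neg, perm_inv_apply_self] using this
    have h5 : g ^ (-(k:ℤ)) * (u * g ^ (m:ℤ)) = u * g ^ (m + k) := by
      calc g ^ (-(k:ℤ)) * (u * g ^ (m:ℤ)) = (g ^ (-(k:ℤ)) * u) * g ^ (m:ℤ) := by group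
      _ = (u * g ^ (k:ℤ)) * g ^ (m:ℤ) := by rw [ug_shift u v hu2 hv2 k]
      _ = u * g ^ (k + m) := by rw [mul_assoc, ← _root_.zpow_add]
      _ = u * g ^ (m + k) := by ring_nf
    rw [h5] at h4
    exact ugt_fpf u v hu2 hv2 hu hv (m + k) (rep x) h4
  have e2 : u * g = v := by rw [hg, ← mul_assoc, hu2, _root_.one_mul]
  have e3 : v * u = g⁻¹ := by
    rw [hg, _root_.mul_inv_rev, inv_self u hu2, inv_self v hv2]
  have htot : ∀ x, (∃ k : ℤ, (g ^ k) (rep x) = x) ∨ (∃ k : ℤ, (u * g ^ k) (rep x) = x) := by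
    intro x
    obtain ⟨w, hwH, hwx⟩ := hrep x
    obtain ⟨k, hk | hk⟩ := hform w hwH
    · exact Or.inl ⟨k, hk ▸ hwx⟩
    · exact Or.inr ⟨k, hk ▸ hwx⟩
  refine ⟨fun x => if ∃ k : ℤ, (g ^ k) (rep x) = x then false else true, ?_, ?_⟩
  · intro x
    have hrx : rep (u x) = rep x := hrep_congr u x huH
    by_cases hx : ∃ k : ℤ, (g ^ k) (rep x) = x
    · obtain ⟨k, hk⟩ := hx
      have hQ : (u * g ^ k) (rep (u x)) = u x := by
        rw [hrx, Equiv.Perm.mul_apply, hk]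
      have hne : ¬ ∃ m : ℤ, (g ^ m) (rep (u x)) = u x := by
        rintro ⟨m, hm⟩
        exact hdisj (u x) m k ⟨hm, hQ⟩
      beta_reduce
      rw [if_neg hne, if_pos ⟨k, hk⟩]
      rfl
    · rcases htot x with hx' | hx'
      · exact absurd hx' hx
      obtain ⟨k, hk⟩ := hx'
      have hP : ∃ m : ℤ, (g ^ m) (rep (u x)) = u x := by
        refine ⟨k, ?_⟩
        rw [hrx]
        have := congrArg (⇑u) hk
        rw [← Equiv.Perm.mul_apply, ← mul_assoc, hu2, _root_.one_mul] at this
        exact this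
      beta_reduce
      rw [if_pos hP, if_neg hx]
      rfl
  · intro x
    have hrx : rep (v x) = rep x := hrep_congr v x hvH
    by_cases hx : ∃ k : ℤ, (g ^ k) (rep x) = x
    · obtain ⟨k, hk⟩ := hx
      have hQ : (u * g ^ (k + 1)) (rep (v x)) = v x := by
        rw [hrx]
        have : u * g ^ (k + 1) = v * g ^ k := by
          rw [_root_.zpow_add, _root_.zpow_one, ← mul_assoc, ← e2]; group
        rw [this, Equiv.Perm.mul_apply, hk]
      have hne : ¬ ∃ m : ℤ, (g ^ m) (rep (v x)) = v x := by
        rintro ⟨m, hm⟩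
        exact hdisj (v x) m (k + 1) ⟨hm, hQ⟩
      beta_reduce
      rw [if_neg hne, if_pos ⟨k, hk⟩]
      rfl
    · rcases htot x with hx' | hx'
      · exact absurd hx' hx
      obtain ⟨k, hk⟩ := hx'
      have hP : ∃ m : ℤ, (g ^ m) (rep (v x)) = v x := by
        refine ⟨k - 1, ?_⟩
        rw [hrx]
        have h6 : v * (u * g ^ k) = g ^ (k - 1) := by
          rw [← mul_assoc, e3]
          rw [← _root_.zpow_neg_one, ← _root_.zpow_add]
          ring_nf
        have := congrArg (⇑v) hk
        rw [← Equiv.Perm.mul_apply, h6] at this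
        exact this
      beta_reduce
      rw [if_pos hP, if_neg hx]
      rfl

private def Pm {n : ℕ} (σ : Equiv.Perm (Fin n)) : Matrix (Fin n) (Fin n) ℂ :=
  fun i j => if i = σ j then 1 else 0

private lemma Pm_mul {n : ℕ} (σ τ : Equiv.Perm (Fin n)) : Pm (σ * τ) = Pm σ * Pm τ := by
  ext i j
  rw [Matrix.mul_apply, Finset.sum_eq_single (τ j)]
  · simp [Pm, Equiv.Perm.mul_apply]
    congr 1
  · intro k _ hk
    simp [Pm, hk]
  · simp

private lemma Pm_conjTranspose {n : ℕ} (σ : Equiv.Perm (Fin n)) : (Pm σ)ᴴ = Pm σ⁻¹ := by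
  ext i j
  simp only [Pm, conjTranspose_apply]
  by_cases h : j = σ i
  · rw [if_pos h, if_pos (by rw [h]; simp)]
    exact star_one ℂ
  · rw [if_neg h, if_neg (by intro hc; exact h (by rw [hc]; simp))]
    exact star_zero ℂ

private def bdEquiv (b : ℕ) : Fin (2 ^ b) ⊕ Fin (2 ^ b) ≃ Fin (2 ^ (b + 1)) :=
  finSumFinEquiv.trans (finCongr (by rw [pow_succ]; omega))

private def bd (b : ℕ) (A D : Matrix (Fin (2 ^ b)) (Fin (2 ^ b)) ℂ) :
    Matrix (Fin (2 ^ (b + 1))) (Fin (2 ^ (b + 1))) ℂ :=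
  (Matrix.fromBlocks A 0 0 D).submatrix (bdEquiv b).symm (bdEquiv b).symm

private lemma bd_mul (b : ℕ) (A D A' D' : Matrix (Fin (2 ^ b)) (Fin (2 ^ b)) ℂ) :
    bd b A D * bd b A' D' = bd b (A * A') (D * D') := by
  unfold bd
  rw [Matrix.submatrix_mul_equiv]
  rw [Matrix.fromBlocks_multiply]
  simp

private lemma bd_one (b : ℕ) : bd b 1 1 = 1 := by
  unfold bd
  rw [Matrix.fromBlocks_one, Matrix.submatrix_one_equiv]

private lemma bd_conjTranspose (b : ℕ) (A D : Matrix (Fin (2 ^ b)) (Fin (2 ^ b)) ℂ) :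
    (bd b A D)ᴴ = bd b Aᴴ Dᴴ := by
  unfold bd
  rw [Matrix.conjTranspose_submatrix, Matrix.fromBlocks_conjTranspose]
  simp

private lemma bdEquiv_symm_lt (b : ℕ) (i : Fin (2 ^ (b + 1))) (hi : i.val < 2 ^ b) :
    (bdEquiv b).symm i = Sum.inl ⟨i.val, hi⟩ := by
  rw [Equiv.symm_apply_eq]
  apply Fin.ext
  simp [bdEquiv]

private lemma bdEquiv_symm_ge (b : ℕ) (i : Fin (2 ^ (b + 1))) (hi : 2 ^ b ≤ i.val) :
    (bdEquiv b).symm i = Sum.inr ⟨i.val - 2 ^ b, by have := i.isLt; have h2 : 2 ^ (b+1) = 2 ^ b * 2 := pow_succ 2 b; omega⟩ := by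
  rw [Equiv.symm_apply_eq]
  apply Fin.ext
  simp [bdEquiv]
  omega

private lemma bd_apply_ll (b : ℕ) (A D : Matrix (Fin (2 ^ b)) (Fin (2 ^ b)) ℂ)
    (i j : Fin (2 ^ (b + 1))) (hi : i.val < 2 ^ b) (hj : j.val < 2 ^ b) :
    bd b A D i j = A ⟨i.val, hi⟩ ⟨j.val, hj⟩ := by
  unfold bd
  rw [Matrix.submatrix_apply, bdEquiv_symm_lt b i hi, bdEquiv_symm_lt b j hj]
  rfl

private lemma bd_apply_gg (b : ℕ) (A D : Matrix (Fin (2 ^ b)) (Fin (2 ^ b)) ℂ)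
    (i j : Fin (2 ^ (b + 1))) (hi : 2 ^ b ≤ i.val) (hj : 2 ^ b ≤ j.val) :
    bd b A D i j = D ⟨i.val - 2 ^ b, by have := i.isLt; have h2 : 2 ^ (b+1) = 2 ^ b * 2 := pow_succ 2 b; omega⟩
      ⟨j.val - 2 ^ b, by have := j.isLt; have h2 : 2 ^ (b+1) = 2 ^ b * 2 := pow_succ 2 b; omega⟩ := by
  unfold bd
  rw [Matrix.submatrix_apply, bdEquiv_symm_ge b i hi, bdEquiv_symm_ge b j hj]
  rfl

private lemma bd_apply_lg (b : ℕ) (A D : Matrix (Fin (2 ^ b)) (Fin (2 ^ b)) ℂ)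
    (i j : Fin (2 ^ (b + 1))) (hi : i.val < 2 ^ b) (hj : 2 ^ b ≤ j.val) :
    bd b A D i j = 0 := by
  unfold bd
  rw [Matrix.submatrix_apply, bdEquiv_symm_lt b i hi, bdEquiv_symm_ge b j hj]
  rfl

private lemma bd_apply_gl (b : ℕ) (A D : Matrix (Fin (2 ^ b)) (Fin (2 ^ b)) ℂ)
    (i j : Fin (2 ^ (b + 1))) (hi : 2 ^ b ≤ i.val) (hj : j.val < 2 ^ b) :
    bd b A D i j = 0 := by
  unfold bd
  rw [Matrix.submatrix_apply, bdEquiv_symm_ge b i hi, bdEquiv_symm_lt b j hj]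
  rfl

private lemma pow_succ_split (b : ℕ) : 2 ^ (b + 1) = 2 ^ b + 2 ^ b := by
  rw [pow_succ]; omega

private lemma isBFM_conjTranspose {n k : ℕ} {B : Matrix (Fin n) (Fin n) ℂ}
    (h : IsButterflyFactorMatrix n k B) : IsButterflyFactorMatrix n k Bᴴ := by
  refine ⟨h.1, h.2.1, fun i j hij => ?_⟩
  have : B j i ≠ 0 := by
    intro hc
    apply hij
    rw [conjTranspose_apply, hc, star_zero]
  have := h.2.2 j i this
  exact ⟨this.1.symm, this.2.symm⟩

private lemma isBFM_bd (b t : ℕ) (ht1 : 1 ≤ t) (ht : t ≤ b)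
    (A D : Matrix (Fin (2 ^ b)) (Fin (2 ^ b)) ℂ)
    (hA : IsButterflyFactorMatrix (2 ^ b) (2 ^ t) A)
    (hD : IsButterflyFactorMatrix (2 ^ b) (2 ^ t) D) :
    IsButterflyFactorMatrix (2 ^ (b + 1)) (2 ^ t) (bd b A D) := by
  obtain ⟨m, hm⟩ := hA.2.1
  have hk0 : 0 < 2 ^ t := Nat.pow_pos (by norm_num)
  have hkd2 : 2 ^ t / 2 = 2 ^ (t - 1) := by
    conv_lhs => rw [show t = (t - 1) + 1 by omega, pow_succ]
    exact Nat.mul_div_cancel _ (by norm_num)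
  have hd2 : 2 ^ (t - 1) ∣ 2 ^ b := pow_dvd_pow 2 (by omega)
  obtain ⟨m', hm'⟩ := hd2
  refine ⟨hA.1, pow_dvd_pow 2 (by omega), fun i j hij => ?_⟩
  by_cases hi : i.val < 2 ^ b <;> by_cases hj : j.val < 2 ^ b
  · rw [bd_apply_ll b A D i j hi hj] at hij
    exact hA.2.2 _ _ hij
  · rw [bd_apply_lg b A D i j hi (by omega)] at hij
    exact absurd rfl hij
  · rw [bd_apply_gl b A D i j (by omega) hj] at hij
    exact absurd rfl hij
  · push_neg at hi hj
    rw [bd_apply_gg b A D i j hi hj] at hij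
    have h2 := hD.2.2 _ _ hij
    simp only at h2
    constructor
    · have e1 : i.val = (i.val - 2 ^ b) + 2 ^ t * m := by omega
      have e2 : j.val = (j.val - 2 ^ b) + 2 ^ t * m := by omega
      rw [e1, e2, Nat.add_mul_div_left _ _ hk0, Nat.add_mul_div_left _ _ hk0, h2.1]
    · rw [hkd2] at h2 ⊢
      have e1 : i.val = (i.val - 2 ^ b) + 2 ^ (t - 1) * m' := by omega
      have e2 : j.val = (j.val - 2 ^ b) + 2 ^ (t - 1) * m' := by omega
      rw [e1, e2, Nat.add_mul_mod_self_left, Nat.add_mul_mod_self_left, h2.2]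

private lemma prod_ofFn_bd (b : ℕ) : ∀ (m : ℕ) (f g : Fin m → Matrix (Fin (2 ^ b)) (Fin (2 ^ b)) ℂ),
    (List.ofFn fun t => bd b (f t) (g t)).prod
      = bd b (List.ofFn f).prod (List.ofFn g).prod := by
  intro m
  induction m with
  | zero => intro f g; simp [bd_one]
  | succ m ih =>
    intro f g
    rw [List.ofFn_succ, List.ofFn_succ (f := f), List.ofFn_succ (f := g),
      List.prod_cons, List.prod_cons, List.prod_cons, ih, bd_mul]

private lemma isBFM_perm_top (b : ℕ) (π : Equiv.Perm (Fin (2 ^ (b + 1))))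
    (hπ : ∀ i, (π i).val % 2 ^ b = i.val % 2 ^ b) :
    IsButterflyFactorMatrix (2 ^ (b + 1)) (2 ^ (b + 1)) (Pm π) := by
  have hNd2 : 2 ^ (b + 1) / 2 = 2 ^ b := by
    rw [pow_succ]; exact Nat.mul_div_cancel _ (by norm_num)
  refine ⟨by have := Nat.one_lt_two_pow (n := b + 1) (by omega); omega, dvd_refl _,
    fun i j hij => ?_⟩
  have hij' : i = π j := by
    by_contra hc
    exact hij (by simp [Pm, hc])
  constructor
  · rw [Nat.div_eq_of_lt i.isLt, Nat.div_eq_of_lt j.isLt]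
  · rw [hNd2, hij', hπ j]

private lemma perm_mod_inv {n : ℕ} {N : ℕ} (π : Equiv.Perm (Fin N))
    (hπ : ∀ i, (π i).val % n = i.val % n) : ∀ i, (π⁻¹ i).val % n = i.val % n := by
  intro i
  have := hπ (π⁻¹ i)
  rw [perm_apply_inv_self] at this
  exact this.symm

private lemma half_perm (b : ℕ) (μ : Equiv.Perm (Fin (2 ^ (b + 1))))
    (hμ : ∀ p, (μ p).val / 2 ^ b = p.val / 2 ^ b) :
    ∃ σ0 σ1 : Equiv.Perm (Fin (2 ^ b)), Pm μ = bd b (Pm σ0) (Pm σ1) := by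
  have hn0 : 0 < 2 ^ b := Nat.pow_pos (by norm_num)
  have hlt : ∀ i : Fin (2 ^ b), i.val < 2 ^ (b + 1) := fun i => by have := i.isLt; omega
  have hlt2 : ∀ i : Fin (2 ^ b), i.val + 2 ^ b < 2 ^ (b + 1) := fun i => by
    have := i.isLt; omega
  -- lower half
  have hdiv0 : ∀ i : Fin (2 ^ b), (μ ⟨i.val, hlt i⟩).val < 2 ^ b := by
    intro i
    have h1 := hμ ⟨i.val, hlt i⟩
    have h2 : i.val / 2 ^ b = 0 := Nat.div_eq_of_lt i.isLt
    simp only [h2] at h1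
    exact (Nat.div_eq_zero_iff.mp h1).resolve_left (by omega)
  have hdiv1 : ∀ i : Fin (2 ^ b), 2 ^ b ≤ (μ ⟨i.val + 2 ^ b, hlt2 i⟩).val := by
    intro i
    have h1 := hμ ⟨i.val + 2 ^ b, hlt2 i⟩
    have h2 : (i.val + 2 ^ b) / 2 ^ b = 1 := by
      rw [Nat.add_div_right _ hn0, Nat.div_eq_of_lt i.isLt]
    simp only [h2] at h1
    by_contra hc
    push_neg at hc
    rw [Nat.div_eq_of_lt hc] at h1
    omega
  let f0 : Fin (2 ^ b) → Fin (2 ^ b) := fun i => ⟨(μ ⟨i.val, hlt i⟩).val, hdiv0 i⟩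
  let f1 : Fin (2 ^ b) → Fin (2 ^ b) := fun i => ⟨(μ ⟨i.val + 2 ^ b, hlt2 i⟩).val - 2 ^ b, by
    have := (μ ⟨i.val + 2 ^ b, hlt2 i⟩).isLt
    have := hdiv1 i
    omega⟩
  have hf0inj : Function.Injective f0 := by
    intro i i' h
    simp only [f0, Fin.mk.injEq] at h
    have h2 : (⟨i.val, hlt i⟩ : Fin (2 ^ (b + 1))) = ⟨i'.val, hlt i'⟩ :=
      μ.injective (Fin.ext h)
    simpa [Fin.ext_iff] using h2
  have hf1inj : Function.Injective f1 := by
    intro i i' h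
    simp only [f1, Fin.mk.injEq] at h
    have h1 := hdiv1 i
    have h2 := hdiv1 i'
    have hv : (μ ⟨i.val + 2 ^ b, hlt2 i⟩).val = (μ ⟨i'.val + 2 ^ b, hlt2 i'⟩).val := by omega
    have h3 : (⟨i.val + 2 ^ b, hlt2 i⟩ : Fin (2 ^ (b + 1))) = ⟨i'.val + 2 ^ b, hlt2 i'⟩ :=
      μ.injective (Fin.ext hv)
    have h4 : i.val + 2 ^ b = i'.val + 2 ^ b := congrArg Fin.val h3
    exact Fin.ext (by omega)
  let σ0 : Equiv.Perm (Fin (2 ^ b)) :=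
    Equiv.ofBijective f0 (Finite.injective_iff_bijective.mp hf0inj)
  let σ1 : Equiv.Perm (Fin (2 ^ b)) :=
    Equiv.ofBijective f1 (Finite.injective_iff_bijective.mp hf1inj)
  refine ⟨σ0, σ1, ?_⟩
  have hdd : ∀ x : Fin (2 ^ (b + 1)), ¬ x.val < 2 ^ b → x.val / 2 ^ b = 1 := by
    intro x hx
    apply Nat.div_eq_of_lt_le (by omega)
    have := x.isLt; omega
  ext i j
  by_cases hi : i.val < 2 ^ b <;> by_cases hj : j.val < 2 ^ b
  · rw [bd_apply_ll b _ _ i j hi hj]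
    show (if i = μ j then (1:ℂ) else 0)
      = (if (⟨i.val, hi⟩ : Fin (2 ^ b)) = σ0 ⟨j.val, hj⟩ then (1:ℂ) else 0)
    have hs : (σ0 ⟨j.val, hj⟩).val = (μ ⟨j.val, hlt ⟨j.val, hj⟩⟩).val := rfl
    have hj' : (⟨j.val, hlt ⟨j.val, hj⟩⟩ : Fin (2 ^ (b + 1))) = j := Fin.ext rfl
    rw [hj'] at hs
    congr 1
    rw [Fin.ext_iff, Fin.ext_iff, hs]
  · rw [bd_apply_lg b _ _ i j hi (by omega)]
    have hne : i ≠ μ j := by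
      intro hc
      have h1 := hμ j
      rw [← hc, Nat.div_eq_of_lt hi, hdd j hj] at h1
      omega
    simp [Pm, hne]
  · rw [bd_apply_gl b _ _ i j (by omega) hj]
    have hne : i ≠ μ j := by
      intro hc
      have h1 := hμ j
      rw [← hc, Nat.div_eq_of_lt hj, hdd i hi] at h1
      omega
    simp [Pm, hne]
  · push_neg at hi hj
    rw [bd_apply_gg b _ _ i j hi hj]
    show (if i = μ j then (1:ℂ) else 0) = (if _ = σ1 _ then (1:ℂ) else 0)
    have hjlt : j.val - 2 ^ b < 2 ^ b := by have := j.isLt; omega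
    have hs : (σ1 ⟨j.val - 2 ^ b, hjlt⟩).val
        = (μ ⟨(j.val - 2 ^ b) + 2 ^ b, hlt2 ⟨j.val - 2 ^ b, hjlt⟩⟩).val - 2 ^ b := rfl
    have hj' : (⟨(j.val - 2 ^ b) + 2 ^ b, hlt2 ⟨j.val - 2 ^ b, hjlt⟩⟩ : Fin (2 ^ (b + 1))) = j :=
      Fin.ext (by simp; omega)
    rw [hj'] at hs
    have hmuj : 2 ^ b ≤ (μ j).val := by
      have h1 := hμ j
      rw [hdd j (by omega)] at h1
      by_contra hc
      push_neg at hc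
      rw [Nat.div_eq_of_lt hc] at h1
      omega
    by_cases hc : i = μ j
    · rw [if_pos hc, if_pos]
      apply Fin.ext
      show i.val - 2 ^ b = _
      rw [hs, hc]
    · rw [if_neg hc, if_neg]
      intro hcc
      apply hc
      have hv : i.val - 2 ^ b = (μ j).val - 2 ^ b := by
        have h5 := congrArg Fin.val hcc
        rw [hs] at h5
        exact h5
      exact Fin.ext (by omega)

private lemma benes_decomp (b : ℕ) (σ : Equiv.Perm (Fin (2 ^ (b + 1)))) :
    ∃ X Y μ : Equiv.Perm (Fin (2 ^ (b + 1))),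
      (∀ i, (X i).val % 2 ^ b = i.val % 2 ^ b) ∧
      (∀ i, (Y i).val % 2 ^ b = i.val % 2 ^ b) ∧
      (∀ p, (μ p).val / 2 ^ b = p.val / 2 ^ b) ∧
      σ = X * μ * Y := by
  classical
  have hn0 : 0 < 2 ^ b := Nat.pow_pos (by norm_num)
  have hsplit := pow_succ_split b
  let n := 2 ^ b
  let N := 2 ^ (b + 1)
  have hnn : n = 2 ^ b := rfl
  have hNN : N = 2 ^ (b + 1) := rfl
  -- the pair-swap involution u
  have hbound : ∀ x : Fin N, (if x.val < n then x.val + n else x.val - n) < N := by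
    intro x; have := x.isLt; split <;> omega
  let fu : Fin N → Fin N := fun x => ⟨if x.val < n then x.val + n else x.val - n, hbound x⟩
  have hfu_inv : Function.Involutive fu := by
    intro x
    apply Fin.ext
    simp only [fu]
    have := x.isLt
    split <;> split <;> omega
  let u : Equiv.Perm (Fin N) := hfu_inv.toPerm
  have hu_apply : ∀ x, u x = fu x := fun x => rfl
  have hu2 : u * u = 1 := by
    ext x
    simp only [Equiv.Perm.mul_apply, Equiv.Perm.one_apply, hu_apply]
    exact congrArg Fin.val (hfu_inv x)
  have hu_fpf : ∀ x, u x ≠ x := by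
    intro x hc
    have h1 := congrArg Fin.val hc
    simp only [hu_apply, fu] at h1
    split at h1 <;> (have := x.isLt; omega)
  have hmod_char : ∀ x : Fin N, x.val % n = if x.val < n then x.val else x.val - n := by
    intro x
    rcases Nat.lt_or_ge x.val n with h | h
    · rw [if_pos h]
      exact Nat.mod_eq_of_lt h
    · rw [if_neg (by omega), Nat.mod_eq_sub_mod h]
      exact Nat.mod_eq_of_lt (by have := x.isLt; omega)
  have hu_mod : ∀ x, (u x).val % n = x.val % n := by
    intro x
    rw [hmod_char, hmod_char]
    simp only [hu_apply, fu]
    have := x.isLt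
    split <;> split <;> omega
  have hpair : ∀ x y : Fin N, x.val % n = y.val % n → x ≠ y → y = u x := by
    intro x y hm hne
    have hx := hmod_char x
    have hy := hmod_char y
    have hxv := x.isLt
    have hyv := y.isLt
    have hnev : x.val ≠ y.val := fun hc => hne (Fin.ext hc)
    apply Fin.ext
    simp only [hu_apply, fu]
    split <;> split at hx <;> split at hy <;> omega
  -- the conjugated involution v
  let v : Equiv.Perm (Fin N) := σ⁻¹ * u * σ
  have hv2 : v * v = 1 := by
    have e : (σ⁻¹ * u * σ) * (σ⁻¹ * u * σ) = σ⁻¹ * (u * u) * σ := by group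
    show (σ⁻¹ * u * σ) * (σ⁻¹ * u * σ) = 1
    rw [e, hu2]
    group
  have hv_apply : ∀ x, v x = σ⁻¹ (u (σ x)) := by
    intro x
    simp [v, Equiv.Perm.mul_apply]
  have hv_fpf : ∀ x, v x ≠ x := by
    intro x hc
    rw [hv_apply] at hc
    have h1 : u (σ x) = σ x := by
      have := congrArg (⇑σ) hc
      rwa [perm_apply_inv_self] at this
    exact hu_fpf _ h1
  obtain ⟨h, hhu, hhv⟩ := exists_coloring u v hu2 hv2 hu_fpf hv_fpf
  -- the input-routing permutation Y
  have hYbound : ∀ (c : Bool) (x : Fin N), n * c.toNat + x.val % n < N := by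
    intro c x
    have h1 : x.val % n < n := Nat.mod_lt _ hn0
    cases c <;> simp <;> omega
  let fY : Fin N → Fin N := fun j => ⟨n * (h j).toNat + j.val % n, hYbound _ j⟩
  have hf_inj : ∀ (g : Fin N → Bool), (∀ x y : Fin N, x.val % n = y.val % n → x ≠ y →
      g y = ! g x) → Function.Injective (fun j : Fin N => (⟨n * (g j).toNat + j.val % n,
        hYbound (g j) j⟩ : Fin N)) := by
    intro g hg j j' heq
    have hval := congrArg Fin.val heq
    simp only at hval
    have hm1 : j.val % n < n := Nat.mod_lt _ hn0
    have hm2 : j'.val % n < n := Nat.mod_lt _ hn0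
    by_contra hne
    cases hj : g j <;> cases hj' : g j' <;> rw [hj, hj'] at hval <;>
      simp only [Bool.toNat_false, Bool.toNat_true, Nat.mul_zero, Nat.mul_one] at hval
    · have hmm : j.val % n = j'.val % n := by omega
      have := hg j j' hmm (by exact fun hc => hne (by rw [hc]))
      rw [hj, hj'] at this
      simp at this
    · omega
    · omega
    · have hmm : j.val % n = j'.val % n := by omega
      have := hg j j' hmm (by exact fun hc => hne (by rw [hc]))
      rw [hj, hj'] at this
      simp at this
  have hYinj : Function.Injective fY := by
    apply hf_inj h
    intro x y hm hne
    rw [hpair x y hm hne, hhu]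
  let Y : Equiv.Perm (Fin N) := Equiv.ofBijective fY (Finite.injective_iff_bijective.mp hYinj)
  have hY_apply : ∀ j, Y j = fY j := fun j => rfl
  have hY_mod : ∀ j, (Y j).val % n = j.val % n := by
    intro j
    rw [hY_apply]
    show (n * (h j).toNat + j.val % n) % n = j.val % n
    rw [Nat.mul_add_mod]
    exact Nat.mod_mod_of_dvd _ dvd_rfl
  have hY_div : ∀ j, (Y j).val / n = (h j).toNat := by
    intro j
    rw [hY_apply]
    show (n * (h j).toNat + j.val % n) / n = (h j).toNat
    rw [Nat.mul_add_div hn0, Nat.div_eq_of_lt (Nat.mod_lt _ hn0), Nat.add_zero]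
  -- the output-routing permutation W (X will be W⁻¹)
  let fW : Fin N → Fin N := fun i => ⟨n * (h (σ⁻¹ i)).toNat + i.val % n, hYbound _ i⟩
  have hWinj : Function.Injective fW := by
    apply hf_inj (fun i => h (σ⁻¹ i))
    intro x y hm hne
    have h1 : σ⁻¹ y = v (σ⁻¹ x) := by
      rw [hv_apply, perm_apply_inv_self, hpair x y hm hne]
    rw [h1, hhv]
  let W : Equiv.Perm (Fin N) := Equiv.ofBijective fW (Finite.injective_iff_bijective.mp hWinj)
  have hW_apply : ∀ i, W i = fW i := fun i => rfl
  have hW_mod : ∀ i, (W i).val % n = i.val % n := by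
    intro i
    rw [hW_apply]
    show (n * (h (σ⁻¹ i)).toNat + i.val % n) % n = i.val % n
    rw [Nat.mul_add_mod]
    exact Nat.mod_mod_of_dvd _ dvd_rfl
  have hW_div : ∀ i, (W i).val / n = (h (σ⁻¹ i)).toNat := by
    intro i
    rw [hW_apply]
    show (n * (h (σ⁻¹ i)).toNat + i.val % n) / n = (h (σ⁻¹ i)).toNat
    rw [Nat.mul_add_div hn0, Nat.div_eq_of_lt (Nat.mod_lt _ hn0), Nat.add_zero]
  refine ⟨W⁻¹, Y, W * σ * Y⁻¹, perm_mod_inv W hW_mod, hY_mod, ?_, by group⟩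
  intro p
  have hp : Y (Y⁻¹ p) = p := perm_apply_inv_self Y p
  have e1 : (W * σ * Y⁻¹) p = W (σ (Y⁻¹ p)) := by
    simp [Equiv.Perm.mul_apply]
  rw [e1, hW_div, perm_inv_apply_self]
  conv_rhs => rw [← hp]
  rw [hY_div]

private lemma butterfly_factors {b : ℕ} {M : Matrix (Fin (2 ^ b)) (Fin (2 ^ b)) ℂ}
    (h : IsButterflyMatrix (2 ^ b) M) :
    ∃ B : ℕ → Matrix (Fin (2 ^ b)) (Fin (2 ^ b)) ℂ,
      (∀ t, 1 ≤ t → t ≤ b → IsButterflyFactorMatrix (2 ^ b) (2 ^ t) (B t)) ∧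
      M = (List.ofFn fun t : Fin b => B (b - t.val)).prod := by
  obtain ⟨b', hb', B, h1, h2⟩ := h
  have hbb : b = b' := Nat.pow_right_injective (by norm_num) hb'
  subst hbb
  exact ⟨B, h1, h2⟩

private lemma perm_in_BBStar : ∀ (b : ℕ) (σ : Equiv.Perm (Fin (2 ^ b))),
    InBBStar (2 ^ b) (Pm σ) := by
  intro b
  induction b with
  | zero =>
    intro σ
    have hone : IsButterflyMatrix (2 ^ 0) (1 : Matrix (Fin (2 ^ 0)) (Fin (2 ^ 0)) ℂ) :=
      ⟨0, rfl, fun _ => 1, fun t ht1 ht2 => absurd ht2 (by omega), by simp⟩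
    refine ⟨1, 1, hone, hone, ?_⟩
    have hall : ∀ x y : Fin (2 ^ 0), x = y := by
      intro x y
      have hx := x.isLt
      have hy := y.isLt
      norm_num at hx hy
      exact Fin.ext (by omega)
    have : Pm σ = 1 := by
      ext i j
      show (if i = σ j then (1:ℂ) else 0) = (1 : Matrix (Fin (2 ^ 0)) (Fin (2 ^ 0)) ℂ) i j
      rw [show σ j = j from hall (σ j) j, Matrix.one_apply]
    rw [this]
    simp
  | succ b ih =>
    intro σ
    obtain ⟨X, Y, μ, hX, hY, hμ, hσ⟩ := benes_decomp b σ
    obtain ⟨σ0, σ1, hbd⟩ := half_perm b μ hμ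
    obtain ⟨M10, M20, hB10, hB20, hP0⟩ := ih σ0
    obtain ⟨M11, M21, hB11, hB21, hP1⟩ := ih σ1
    obtain ⟨B0, hB0f, hB0p⟩ := butterfly_factors hB10
    obtain ⟨B1, hB1f, hB1p⟩ := butterfly_factors hB11
    obtain ⟨C0, hC0f, hC0p⟩ := butterfly_factors hB20
    obtain ⟨C1, hC1f, hC1p⟩ := butterfly_factors hB21
    set Bf : ℕ → Matrix (Fin (2 ^ (b + 1))) (Fin (2 ^ (b + 1))) ℂ :=
      fun t => if t = b + 1 then Pm X else bd b (B0 t) (B1 t) with hBf_def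
    set Cf : ℕ → Matrix (Fin (2 ^ (b + 1))) (Fin (2 ^ (b + 1))) ℂ :=
      fun t => if t = b + 1 then (Pm Y)ᴴ else bd b (C0 t) (C1 t) with hCf_def
    have hprod : ∀ (F : ℕ → Matrix (Fin (2 ^ (b + 1))) (Fin (2 ^ (b + 1))) ℂ)
        (f g : ℕ → Matrix (Fin (2 ^ b)) (Fin (2 ^ b)) ℂ),
        (∀ t, t ≤ b → F t = bd b (f t) (g t)) →
        (List.ofFn fun t : Fin (b + 1) => F (b + 1 - t.val)).prod
          = F (b + 1) * bd b ((List.ofFn fun t : Fin b => f (b - t.val)).prod)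
              ((List.ofFn fun t : Fin b => g (b - t.val)).prod) := by
      intro F f g hF
      rw [List.ofFn_succ, List.prod_cons]
      congr 1
      have he : (fun t : Fin b => F (b + 1 - (Fin.succ t).val))
          = fun t : Fin b => bd b (f (b - t.val)) (g (b - t.val)) := by
        funext t
        have h1 : b + 1 - (Fin.succ t).val = b - t.val := by
          have h2 : (Fin.succ t).val = t.val + 1 := rfl
          omega
        rw [h1, hF _ (by omega)]
      rw [he, prod_ofFn_bd]
    have hM1 : (List.ofFn fun t : Fin (b + 1) => Bf (b + 1 - t.val)).prod
        = Pm X * bd b M10 M11 := by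
      rw [hprod Bf B0 B1 (fun t ht => by simp [hBf_def, Nat.ne_of_lt (by omega : t < b + 1)])]
      rw [hB0p, hB1p]
      congr 1
      simp [hBf_def]
    have hM2 : (List.ofFn fun t : Fin (b + 1) => Cf (b + 1 - t.val)).prod
        = (Pm Y)ᴴ * bd b M20 M21 := by
      rw [hprod Cf C0 C1 (fun t ht => by simp [hCf_def, Nat.ne_of_lt (by omega : t < b + 1)])]
      rw [hC0p, hC1p]
      congr 1
      simp [hCf_def]
    have hBff : ∀ t, 1 ≤ t → t ≤ b + 1 → IsButterflyFactorMatrix (2 ^ (b + 1)) (2 ^ t) (Bf t) := by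
      intro t ht1 ht2
      by_cases h : t = b + 1
      · subst h
        simp only [hBf_def, if_pos rfl]
        exact isBFM_perm_top b X hX
      · have htb : t ≤ b := by omega
        simp only [hBf_def, if_neg h]
        exact isBFM_bd b t ht1 htb _ _ (hB0f t ht1 htb) (hB1f t ht1 htb)
    have hCff : ∀ t, 1 ≤ t → t ≤ b + 1 → IsButterflyFactorMatrix (2 ^ (b + 1)) (2 ^ t) (Cf t) := by
      intro t ht1 ht2
      by_cases h : t = b + 1
      · subst h
        simp only [hCf_def, if_pos rfl]
        rw [Pm_conjTranspose]
        exact isBFM_perm_top b Y⁻¹ (perm_mod_inv Y hY)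
      · have htb : t ≤ b := by omega
        simp only [hCf_def, if_neg h]
        exact isBFM_bd b t ht1 htb _ _ (hC0f t ht1 htb) (hC1f t ht1 htb)
    refine ⟨(List.ofFn fun t : Fin (b + 1) => Bf (b + 1 - t.val)).prod,
      (List.ofFn fun t : Fin (b + 1) => Cf (b + 1 - t.val)).prod,
      ⟨b + 1, rfl, Bf, hBff, rfl⟩, ⟨b + 1, rfl, Cf, hCff, rfl⟩, ?_⟩
    rw [hM1, hM2, hσ, Pm_mul, Pm_mul, Matrix.conjTranspose_mul,
      Matrix.conjTranspose_conjTranspose, bd_conjTranspose, hbd, hP0, hP1, ← bd_mul]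
    simp only [Matrix.mul_assoc]

end Aux

/-- Every `n × n` permutation matrix (`n` a power of 2) is in `BB*`. -/
theorem permutation_in_BBStar (b n : ℕ) (hn : n = 2 ^ b)
    (P : Matrix (Fin n) (Fin n) ℂ) (hP : IsPermutationMatrix n P) :
    InBBStar n P := by
  subst hn
  obtain ⟨σ, hσ⟩ := hP
  have hPm : P = Pm σ := by
    ext i j
    rw [hσ]
    rfl
  rw [hPm]
  exact perm_in_BBStar b σ
end
end

section
/- Let n be a power of 2 and let P be an n × n permutation matrix over ℂ. Then P can be decomposed as P = L · R, where L is a modular-balanced permutation matrix and R is the conjugate transpose of a butterfly matrix of size n. -/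
noncomputable section

open Matrix

section PermDecompAux


namespace PermDecomp

open Equiv

/-! ### basic nat helpers -/

lemma dm_div (m q r : ℕ) (hm : 0 < m) (hr : r < m) : (m * q + r) / m = q := by
  rw [Nat.mul_add_div hm, Nat.div_eq_of_lt hr, add_zero]

lemma dm_mod (m q r : ℕ) (hr : r < m) : (m * q + r) % m = r := by
  rw [Nat.mul_add_mod, Nat.mod_eq_of_lt hr]

lemma eq_of_div_mod (d x y : ℕ) (h1 : x / d = y / d) (h2 : x % d = y % d) : x = y := by
  have hx := Nat.div_add_mod x d
  have hy := Nat.div_add_mod y d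
  rw [h1, h2] at hx
  omega

lemma div_pres_mono {s t x y : ℕ} (hst : s ≤ t) (h : x / 2 ^ s = y / 2 ^ s) :
    x / 2 ^ t = y / 2 ^ t := by
  have : (2:ℕ) ^ t = 2 ^ s * 2 ^ (t - s) := by rw [← pow_add]; congr 1; omega
  rw [this, ← Nat.div_div_eq_div_mul, ← Nat.div_div_eq_div_mul, h]

lemma mod_pres_mono {s t x y : ℕ} (hst : t ≤ s) (h : x % 2 ^ s = y % 2 ^ s) :
    x % 2 ^ t = y % 2 ^ t := by
  have hd : (2:ℕ) ^ t ∣ 2 ^ s := pow_dvd_pow 2 hst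
  rw [← Nat.mod_mod_of_dvd x hd, ← Nat.mod_mod_of_dvd y hd, h]

lemma lt_of_div_eq {t x y K : ℕ} (h : x / 2 ^ t = y / 2 ^ t) (hy : y < 2 ^ t * K) :
    x < 2 ^ t * K := by
  have hp : (0:ℕ) < 2 ^ t := Nat.pow_pos (n := t) (by norm_num)
  have h1 : y / 2 ^ t < K := Nat.div_lt_of_lt_mul (by omega)
  have h2 : x / 2 ^ t < K := by omega
  calc x < 2 ^ t * (x / 2 ^ t) + 2 ^ t := by
        have := Nat.div_add_mod x (2 ^ t); have := Nat.mod_lt x hp; omega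
    _ ≤ 2 ^ t * K := by nlinarith

/-! ### the toggle function -/

def tf (h j : ℕ) : ℕ := if j % (2 * h) < h then j + h else j - h

lemma tf_spec (h : ℕ) (hh : 0 < h) (j : ℕ) :
    tf h j / (2 * h) = j / (2 * h) ∧ tf h j % h = j % h ∧ tf h (tf h j) = j := by
  obtain ⟨q, r, hr, rfl⟩ : ∃ q r, r < 2 * h ∧ j = 2 * h * q + r :=
    ⟨j / (2 * h), j % (2 * h), Nat.mod_lt _ (by omega), (Nat.div_add_mod j (2 * h)).symm⟩
  have hmod := dm_mod (2 * h) q r hr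
  have hdiv := dm_div (2 * h) q r (by omega) hr
  by_cases hc : r < h
  · have e1 : tf h (2 * h * q + r) = 2 * h * q + (r + h) := by
      unfold tf; rw [hmod, if_pos hc]; ring
    have e2 : tf h (2 * h * q + (r + h)) = 2 * h * q + r := by
      unfold tf; rw [dm_mod (2 * h) q (r + h) (by omega), if_neg (by omega)]; omega
    refine ⟨?_, ?_, by rw [e1, e2]⟩
    · rw [e1, hdiv, dm_div (2 * h) q (r + h) (by omega) (by omega)]
    · rw [e1]
      have a1 : 2 * h * q + (r + h) = h * (2 * q + 1) + r := by ring
      have a2 : 2 * h * q + r = h * (2 * q) + r := by ring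
      rw [a1, a2, Nat.mul_add_mod, Nat.mul_add_mod]
  · have e1 : tf h (2 * h * q + r) = 2 * h * q + (r - h) := by
      unfold tf; rw [hmod, if_neg hc]; omega
    have e2 : tf h (2 * h * q + (r - h)) = 2 * h * q + r := by
      unfold tf; rw [dm_mod (2 * h) q (r - h) (by omega), if_pos (by omega)]; omega
    refine ⟨?_, ?_, by rw [e1, e2]⟩
    · rw [e1, hdiv, dm_div (2 * h) q (r - h) (by omega) (by omega)]
    · rw [e1]
      have a1 : 2 * h * q + (r - h) = h * (2 * q) + (r - h) := by ring
      have a2 : 2 * h * q + r = h * (2 * q + 1) + (r - h) := by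
        have e : h * (2 * q + 1) = 2 * h * q + h := by ring
        omega
      rw [a1, a2, Nat.mul_add_mod, Nat.mul_add_mod]

lemma tf_ge (h : ℕ) (hh : 0 < h) (j : ℕ) (hj : 2 * h ≤ j) : 2 * h ≤ tf h j := by
  obtain ⟨q, r, hr, rfl⟩ : ∃ q r, r < 2 * h ∧ j = 2 * h * q + r :=
    ⟨j / (2 * h), j % (2 * h), Nat.mod_lt _ (by omega), (Nat.div_add_mod j (2 * h)).symm⟩
  have hmod := dm_mod (2 * h) q r hr
  have hq : 1 ≤ q := by nlinarith
  have hge : 2 * h ≤ 2 * h * q := by nlinarith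
  unfold tf
  rw [hmod]
  split <;> omega

lemma tf_lt (h K : ℕ) (hh : 0 < h) (j : ℕ) (hj : j < 2 * h * K) : tf h j < 2 * h * K := by
  have hdiv := (tf_spec h hh j).1
  have hp : (0:ℕ) < 2 * h := by omega
  have h1 : j / (2 * h) < K := Nat.div_lt_of_lt_mul (by omega)
  have h2 := Nat.div_add_mod (tf h j) (2 * h)
  have h3 : tf h j % (2 * h) < 2 * h := Nat.mod_lt _ hp
  nlinarith

/-! ### conditional toggles as permutations -/

def ctf (h : ℕ) (c : ℕ → Bool) (j : ℕ) : ℕ := if c j then tf h j else j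

lemma ctf_invol (h : ℕ) (c : ℕ → Bool) (hh : 0 < h) (hc : ∀ j, c (tf h j) = c j) :
    Function.Involutive (ctf h c) := by
  intro j
  unfold ctf
  by_cases hj : c j
  · rw [if_pos hj, if_pos (by rw [hc]; exact hj), (tf_spec h hh j).2.2]
  · rw [if_neg hj, if_neg hj]

def ctfPerm (h : ℕ) (c : ℕ → Bool) (hh : 0 < h) (hc : ∀ j, c (tf h j) = c j) :
    Equiv.Perm ℕ := (ctf_invol h c hh hc).toPerm

@[simp] lemma ctfPerm_apply (h : ℕ) (c : ℕ → Bool) (hh : 0 < h) (hc : ∀ j, c (tf h j) = c j)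
    (j : ℕ) : ctfPerm h c hh hc j = ctf h c j := rfl

lemma ctf_div (h : ℕ) (c : ℕ → Bool) (hh : 0 < h) (j : ℕ) :
    ctf h c j / (2 * h) = j / (2 * h) := by
  unfold ctf; split
  · exact (tf_spec h hh j).1
  · rfl

lemma ctf_mod (h : ℕ) (c : ℕ → Bool) (hh : 0 < h) (j : ℕ) :
    ctf h c j % h = j % h := by
  unfold ctf; split
  · exact (tf_spec h hh j).2.1
  · rfl

/-! ### permutation helpers -/

lemma perm_inv_mem (σ : Equiv.Perm ℕ) (S : Finset ℕ) (h : ∀ j ∈ S, σ j ∈ S) :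
    ∀ j ∈ S, σ⁻¹ j ∈ S := by
  classical
  have hinj : Function.Injective (fun x : {x // x ∈ S} => (⟨σ x, h _ x.2⟩ : {x // x ∈ S})) := by
    intro a b hab
    simp only [Subtype.mk.injEq] at hab
    exact Subtype.ext (σ.injective hab)
  have hsurj := Finite.injective_iff_surjective.mp hinj
  intro j hj
  obtain ⟨⟨k, hk⟩, hk2⟩ := hsurj ⟨j, hj⟩
  have : σ k = j := by simpa using congrArg Subtype.val hk2
  have : σ⁻¹ j = k := by rw [← this]; simp
  rw [this]; exact hk

lemma perm_inv_lt (σ : Equiv.Perm ℕ) (N : ℕ) (h : ∀ j, j < N → σ j < N) :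
    ∀ j, j < N → σ⁻¹ j < N := by
  intro j hj
  have := perm_inv_mem σ (Finset.range N) (by intro k hk; simp only [Finset.mem_range] at *; exact h k hk) j (by simpa using hj)
  simpa using this

/-! ### composites -/

def comps (F : ℕ → Equiv.Perm ℕ) : ℕ → Equiv.Perm ℕ
  | 0 => 1
  | t + 1 => F (t + 1) * comps F t

lemma comps_rel (F G : ℕ → Equiv.Perm ℕ) (R : ℕ → ℕ → Prop) (b : ℕ)
    (hR : ∀ t, 1 ≤ t → t ≤ b → ∀ x y, R x y → R (F t x) (G t y)) :
    ∀ x y, R x y → R (comps F b x) (comps G b y) := by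
  induction b with
  | zero => intro x y h; simpa [comps] using h
  | succ u ih =>
    intro x y h
    have := ih (fun t h1 h2 => hR t h1 (by omega)) x y h
    simpa [comps, Equiv.Perm.mul_apply] using hR (u+1) (by omega) (by omega) _ _ this

lemma comps_congr (F G : ℕ → Equiv.Perm ℕ) (b : ℕ) (h : ∀ t, 1 ≤ t → t ≤ b → F t = G t) :
    comps F b = comps G b := by
  induction b with
  | zero => rfl
  | succ u ih =>
    simp only [comps]
    rw [ih (fun t h1 h2 => h t h1 (by omega)), h (u+1) (by omega) (by omega)]

end PermDecomp

namespace PermDecomp2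
open PermDecomp

section
variable (M : ℕ)

/-- The main splitting step: given a permutation preserving `[0, 2M)`, produce two
conditional-toggle involutions `α`, `β` at scale `M` such that `α ∘ σ ∘ β` preserves
both halves `[0,M)` and `[M,2M)`. -/
lemma split_step (hM : 0 < M) (σ : Equiv.Perm ℕ) (hσ : ∀ j, j < 2*M → σ j < 2*M) :
    ∃ α β : Equiv.Perm ℕ,
      (∀ j, α j / (2*M) = j / (2*M) ∧ α j % M = j % M ∧
            β j / (2*M) = j / (2*M) ∧ β j % M = j % M) ∧
      (∀ j, 2*M ≤ j → α j = j ∧ β j = j) ∧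
      (∀ j, α (α j) = j ∧ β (β j) = j) ∧
      (∀ p, p < M → α (σ (β p)) < M) ∧
      (∀ p, p < M → M ≤ α (σ (β (p+M))) ∧ α (σ (β (p+M))) < 2*M) := by
  classical
  -- the bipartite graph on half-index pairs
  set t : Fin M → Finset (Fin M) := fun p =>
    {⟨σ p.val % M, Nat.mod_lt _ hM⟩, ⟨σ (p.val + M) % M, Nat.mod_lt _ hM⟩} with ht
  -- Hall's condition
  have hall : ∀ s : Finset (Fin M), s.card ≤ (s.biUnion t).card := by
    intro s
    set U := s.biUnion t with hU
    set A : Finset ℕ := s.image (fun p : Fin M => σ p.val) ∪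
        s.image (fun p : Fin M => σ (p.val + M)) with hA
    have hinj1 : Function.Injective (fun p : Fin M => σ p.val) := by
      intro a b hab; exact Fin.ext (σ.injective hab)
    have hinj2 : Function.Injective (fun p : Fin M => σ (p.val + M)) := by
      intro a b hab; have := σ.injective hab; exact Fin.ext (by omega)
    have hdisj : Disjoint (s.image (fun p : Fin M => σ p.val))
        (s.image (fun p : Fin M => σ (p.val + M))) := by
      rw [Finset.disjoint_left]
      intro x hx1 hx2
      obtain ⟨p, _, hp⟩ := Finset.mem_image.mp hx1
      obtain ⟨q, _, hq⟩ := Finset.mem_image.mp hx2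
      have : p.val = q.val + M := σ.injective (hp.trans hq.symm)
      have := p.isLt; omega
    have hcardA : A.card = 2 * s.card := by
      rw [hA, Finset.card_union_of_disjoint hdisj,
        Finset.card_image_of_injective _ hinj1, Finset.card_image_of_injective _ hinj2]
      ring
    have hsub : A ⊆ U.biUnion (fun q : Fin M => ({q.val, q.val + M} : Finset ℕ)) := by
      intro x hx
      have hmem : ∃ p ∈ s, (x = σ p.val ∧ x < 2*M) ∨ (x = σ (p.val + M) ∧ x < 2*M) := by
        rcases Finset.mem_union.mp hx with hx1 | hx1
        · obtain ⟨p, hp, hpx⟩ := Finset.mem_image.mp hx1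
          exact ⟨p, hp, Or.inl ⟨hpx.symm, hpx ▸ hσ _ (by have := p.isLt; omega)⟩⟩
        · obtain ⟨p, hp, hpx⟩ := Finset.mem_image.mp hx1
          exact ⟨p, hp, Or.inr ⟨hpx.symm, hpx ▸ hσ _ (by have := p.isLt; omega)⟩⟩
      obtain ⟨p, hps, hcase⟩ := hmem
      have key : ∀ (q : Fin M), q ∈ t p → x % M = q.val → x < 2*M →
          x ∈ U.biUnion (fun q : Fin M => ({q.val, q.val + M} : Finset ℕ)) := by
        intro q hq hxq hx2
        refine Finset.mem_biUnion.mpr ⟨q, Finset.mem_biUnion.mpr ⟨p, hps, hq⟩, ?_⟩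
        simp only [Finset.mem_insert, Finset.mem_singleton]
        by_cases hxM : x < M
        · left; rw [← hxq, Nat.mod_eq_of_lt hxM]
        · right
          have : x % M = x - M := by
            rw [Nat.mod_eq_sub_mod (by omega), Nat.mod_eq_of_lt (by omega)]
          omega
      rcases hcase with ⟨rfl, hx2⟩ | ⟨rfl, hx2⟩
      · exact key ⟨σ p.val % M, Nat.mod_lt _ hM⟩ (by simp [ht]) rfl hx2
      · exact key ⟨σ (p.val + M) % M, Nat.mod_lt _ hM⟩ (by simp [ht]) rfl hx2
    have hb1 : A.card ≤ (U.biUnion (fun q : Fin M => ({q.val, q.val + M} : Finset ℕ))).card :=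
      Finset.card_le_card hsub
    have hb2 : (U.biUnion (fun q : Fin M => ({q.val, q.val + M} : Finset ℕ))).card ≤
        ∑ q ∈ U, ({q.val, q.val + M} : Finset ℕ).card := Finset.card_biUnion_le
    have hb3 : ∑ q ∈ U, ({q.val, q.val + M} : Finset ℕ).card ≤ ∑ _q ∈ U, 2 := by
      apply Finset.sum_le_sum
      intro q _
      exact (Finset.card_insert_le _ _).trans (by simp)
    have hb4 : ∑ _q ∈ U, 2 = 2 * U.card := by
      rw [Finset.sum_const, smul_eq_mul]; ring
    omega
  obtain ⟨f, hfinj, hft⟩ := (Finset.all_card_le_biUnion_card_iff_exists_injective t).mp hall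
  have hfbij : Function.Bijective f := Finite.injective_iff_bijective.mp hfinj
  set e := Equiv.ofBijective f hfbij with he
  -- ℕ-valued versions
  set fN : ℕ → ℕ := fun p => if h : p < M then (f ⟨p, h⟩).val else p with hfN
  set fI : ℕ → ℕ := fun q => if h : q < M then (e.symm ⟨q, h⟩).val else q with hfI
  have hfN_lt : ∀ p, p < M → fN p < M := by
    intro p hp; simp only [hfN, dif_pos hp]; exact (f ⟨p, hp⟩).isLt
  have hfI_lt : ∀ q, q < M → fI q < M := by
    intro q hq; simp only [hfI, dif_pos hq]; exact (e.symm ⟨q, hq⟩).isLt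
  have hfI_fN : ∀ p, p < M → fI (fN p) = p := by
    intro p hp
    simp only [hfN, dif_pos hp, hfI, dif_pos (f ⟨p, hp⟩).isLt]
    have : (⟨(f ⟨p, hp⟩).val, (f ⟨p, hp⟩).isLt⟩ : Fin M) = e ⟨p, hp⟩ := by
      apply Fin.ext; rfl
    rw [this, Equiv.symm_apply_apply]
  have hfN_fI : ∀ q, q < M → fN (fI q) = q := by
    intro q hq
    simp only [hfI, dif_pos hq, hfN, dif_pos (e.symm ⟨q, hq⟩).isLt]
    have : (⟨(e.symm ⟨q, hq⟩).val, (e.symm ⟨q, hq⟩).isLt⟩ : Fin M) = e.symm ⟨q, hq⟩ := by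
      apply Fin.ext; rfl
    rw [this]
    have := Equiv.apply_symm_apply e ⟨q, hq⟩
    exact congrArg Fin.val this
  have hfN_mem : ∀ p, p < M → fN p = σ p % M ∨ fN p = σ (p + M) % M := by
    intro p hp
    have := hft ⟨p, hp⟩
    simp only [ht, Finset.mem_insert, Finset.mem_singleton] at this
    simp only [hfN, dif_pos hp]
    rcases this with h | h
    · left; exact congrArg Fin.val h
    · right; exact congrArg Fin.val h
  -- representatives
  set jrep : ℕ → ℕ := fun p => if σ (p + M) % M = fN p then p + M else p with hjrep
  have hjrep_or : ∀ p, jrep p = p ∨ jrep p = p + M := by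
    intro p; simp only [hjrep]; split <;> simp
  have hjrep_mod : ∀ p, p < M → jrep p % M = p := by
    intro p hp
    rcases hjrep_or p with h | h <;> rw [h]
    · exact Nat.mod_eq_of_lt hp
    · rw [Nat.add_mod_right, Nat.mod_eq_of_lt hp]
  have hjrep_lt : ∀ p, p < M → jrep p < 2*M := by
    intro p hp; rcases hjrep_or p with h | h <;> omega
  have hjrep_img : ∀ p, p < M → σ (jrep p) % M = fN p := by
    intro p hp
    simp only [hjrep]
    split
    · assumption
    · rcases hfN_mem p hp with h | h
      · exact h.symm
      · exact absurd h.symm (by assumption)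

  -- the β toggle
  set cb : ℕ → Bool := fun j => decide (j < 2*M ∧ jrep (j % M) = j % M) with hcb
  have hcbinv : ∀ j, cb (tf M j) = cb j := by
    intro j
    by_cases hj : j < 2*M
    · have h1 : tf M j < 2*M := by
        have := tf_lt M 1 hM j (by omega); omega
      have h2 : tf M j % M = j % M := (tf_spec M hM j).2.1
      simp only [hcb]
      exact decide_eq_decide.mpr (by rw [h2]; tauto)
    · have h1 : 2*M ≤ tf M j := tf_ge M hM j (by omega)
      simp only [hcb]
      exact decide_eq_decide.mpr (by constructor <;> (intro h; omega))
  set β := ctfPerm M cb hM hcbinv with hβ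
  have hβapp : ∀ j, β j = ctf M cb j := fun j => rfl
  -- the α toggle
  set ca : ℕ → Bool := fun j => decide (j < 2*M ∧ σ (jrep (fI (j % M))) < M) with hca
  have hcainv : ∀ j, ca (tf M j) = ca j := by
    intro j
    by_cases hj : j < 2*M
    · have h1 : tf M j < 2*M := by
        have := tf_lt M 1 hM j (by omega); omega
      have h2 : tf M j % M = j % M := (tf_spec M hM j).2.1
      simp only [hca]
      exact decide_eq_decide.mpr (by rw [h2]; tauto)
    · have h1 : 2*M ≤ tf M j := tf_ge M hM j (by omega)
      simp only [hca]
      exact decide_eq_decide.mpr (by constructor <;> (intro h; omega))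
  set α := ctfPerm M ca hM hcainv with hα
  have hαapp : ∀ j, α j = ctf M ca j := fun j => rfl
  -- basic tf computations below 2M
  have htf_lo : ∀ x, x < M → tf M x = x + M := by
    intro x hx; unfold tf; rw [Nat.mod_eq_of_lt (by omega), if_pos hx]
  have htf_hi : ∀ x, M ≤ x → x < 2*M → tf M x = x - M := by
    intro x hx1 hx2; unfold tf; rw [Nat.mod_eq_of_lt (by omega), if_neg (by omega)]
  -- β on pairs
  have hβtop : ∀ p, p < M → β (p + M) = jrep p := by
    intro p hp
    rw [hβapp]
    unfold ctf
    have hm : (p + M) % M = p := by rw [Nat.add_mod_right, Nat.mod_eq_of_lt hp]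
    have hcval : cb (p + M) = decide (jrep p = p) := by
      simp only [hcb, hm]
      exact decide_eq_decide.mpr (by constructor <;> (intro h; first | exact h.2 | exact ⟨by omega, h⟩))
    rw [hcval]
    by_cases hj : jrep p = p
    · rw [if_pos (by simpa using hj), htf_hi _ (by omega) (by omega), hj]; omega
    · rw [if_neg (by simpa using hj)]
      rcases hjrep_or p with h | h
      · exact absurd h hj
      · exact h.symm
  have hβbot : ∀ p, p < M → β p ≠ jrep p ∧ β p < 2*M ∧ β p % M = p := by
    intro p hp
    rw [hβapp]
    unfold ctf
    have hm : p % M = p := Nat.mod_eq_of_lt hp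
    have hcval : cb p = decide (jrep p = p) := by
      simp only [hcb, hm]
      exact decide_eq_decide.mpr (by constructor <;> (intro h; first | exact h.2 | exact ⟨by omega, h⟩))
    rw [hcval]
    by_cases hj : jrep p = p
    · rw [if_pos (by simpa using hj), htf_lo _ hp]
      refine ⟨by omega, by omega, by rw [Nat.add_mod_right, hm]⟩
    · rw [if_neg (by simpa using hj)]
      rcases hjrep_or p with h | h
      · exact absurd h hj
      · exact ⟨by omega, by omega, hm⟩
  -- T1 : the chosen representatives route to the top half
  have hT1 : ∀ p, p < M → α (σ (jrep p)) = fN p + M := by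
    intro p hp
    set x := σ (jrep p) with hx
    have hx2 : x < 2*M := hσ _ (hjrep_lt p hp)
    have hxm : x % M = fN p := hjrep_img p hp
    have hfix : fI (x % M) = p := by rw [hxm, hfI_fN p hp]
    have hcval : ca x = decide (x < M) := by
      simp only [hca, hfix]
      refine decide_eq_decide.mpr ⟨fun h => ?_, fun h => ⟨by omega, by rw [← hx]; exact h⟩⟩
      rw [hx]; exact h.2
    rw [hαapp]
    unfold ctf
    rw [hcval]
    by_cases hxM : x < M
    · rw [if_pos (by simpa using hxM), htf_lo _ hxM, ← hxm, Nat.mod_eq_of_lt hxM]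
    · rw [if_neg (by simpa using hxM)]
      have : x % M = x - M := by
        rw [Nat.mod_eq_sub_mod (by omega), Nat.mod_eq_of_lt (by omega)]
      omega
  -- T2 : the other elements route to the bottom half
  have hT2 : ∀ p, p < M → α (σ (β p)) < M := by
    intro p hp
    obtain ⟨ho1, ho2, ho3⟩ := hβbot p hp
    set y := σ (β p) with hy
    have hy2 : y < 2*M := hσ _ ho2
    set q' := y % M with hq'
    have hq'lt : q' < M := Nat.mod_lt _ hM
    set p' := fI q' with hp'
    have hp'lt : p' < M := hfI_lt _ hq'lt
    have hx'm : σ (jrep p') % M = q' := by rw [hjrep_img p' hp'lt, hp', hfN_fI _ hq'lt]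
    have hx'2 : σ (jrep p') < 2*M := hσ _ (hjrep_lt p' hp'lt)
    have hyne : y ≠ σ (jrep p') := by
      intro hcon
      have hbe : β p = jrep p' := σ.injective hcon
      have : p = p' := by rw [← hjrep_mod p' hp'lt, ← hbe, ho3]
      rw [← this] at hbe
      exact ho1 hbe
    have hcval : ca y = decide (σ (jrep p') < M) := by
      simp only [hca, ← hq', hp']
      exact decide_eq_decide.mpr (by constructor <;> (intro h; first | exact h.2 | exact ⟨by omega, h⟩))
    rw [hαapp]
    unfold ctf
    rw [hcval]
    have hycase : y = q' ∨ y = q' + M := by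
      by_cases hyM : y < M
      · have := Nat.mod_eq_of_lt hyM
        omega
      · have h1 : y % M = y - M := by
          rw [Nat.mod_eq_sub_mod (by omega), Nat.mod_eq_of_lt (by omega)]
        omega
    have hx'case : σ (jrep p') = q' ∨ σ (jrep p') = q' + M := by
      by_cases hxM : σ (jrep p') < M
      · have := Nat.mod_eq_of_lt hxM
        omega
      · have h1 : σ (jrep p') % M = σ (jrep p') - M := by
          rw [Nat.mod_eq_sub_mod (by omega), Nat.mod_eq_of_lt (by omega)]
        omega
    by_cases hxM : σ (jrep p') < M
    · rw [if_pos (by simpa using hxM)]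
      have hx'eq : σ (jrep p') = q' := by omega
      have hyval : y = q' + M := by omega
      rw [htf_hi y (by omega) hy2]
      omega
    · rw [if_neg (by simpa using hxM)]
      omega
  -- assemble
  refine ⟨α, β, ?_, ?_, ?_, ?_, ?_⟩
  · intro j
    have d1 : α j / (2*M) = j / (2*M) := by rw [hαapp]; exact ctf_div M ca hM j
    have m1 : α j % M = j % M := by rw [hαapp]; exact ctf_mod M ca hM j
    have d2 : β j / (2*M) = j / (2*M) := by rw [hβapp]; exact ctf_div M cb hM j
    have m2 : β j % M = j % M := by rw [hβapp]; exact ctf_mod M cb hM j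
    exact ⟨d1, m1, d2, m2⟩
  · intro j hj
    constructor
    · rw [hαapp]; unfold ctf
      rw [if_neg (by simp only [hca]; simp only [decide_eq_true_eq]; omega)]
    · rw [hβapp]; unfold ctf
      rw [if_neg (by simp only [hcb]; simp only [decide_eq_true_eq]; omega)]
  · intro j
    exact ⟨ctf_invol M ca hM hcainv j, ctf_invol M cb hM hcbinv j⟩
  · exact hT2
  · intro p hp
    rw [hβtop p hp, hT1 p hp]
    have := hfN_lt p hp
    omega

end


/-! ### piecewise permutation constructors -/

def restrictPerm (M : ℕ) (σ : Equiv.Perm ℕ) (h : ∀ j, j < M → σ j < M) : Equiv.Perm ℕ where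
  toFun j := if j < M then σ j else j
  invFun j := if j < M then σ⁻¹ j else j
  left_inv := by
    intro j
    by_cases hj : j < M
    · simp only [if_pos hj, if_pos (h j hj), Equiv.Perm.inv_def, Equiv.symm_apply_apply]
    · simp only [if_neg hj]
  right_inv := by
    intro j
    by_cases hj : j < M
    · simp only [if_pos hj, if_pos (perm_inv_lt σ M h j hj)]; exact Equiv.apply_symm_apply σ j
    · simp only [if_neg hj]

@[simp] lemma restrictPerm_apply (M : ℕ) (σ : Equiv.Perm ℕ) (h : ∀ j, j < M → σ j < M)
    (j : ℕ) : restrictPerm M σ h j = if j < M then σ j else j := rfl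

lemma strip_inv (M : ℕ) (σ : Equiv.Perm ℕ) (h : ∀ x, x < M → M ≤ σ (x + M) ∧ σ (x + M) < 2*M) :
    ∀ x, x < M → M ≤ σ⁻¹ (x + M) ∧ σ⁻¹ (x + M) < 2*M := by
  intro x hx
  have hmem : ∀ j ∈ Finset.Ico M (2*M), σ j ∈ Finset.Ico M (2*M) := by
    intro j hj
    simp only [Finset.mem_Ico] at hj ⊢
    have : j = (j - M) + M := by omega
    rw [this]
    exact h (j - M) (by omega)
  have := perm_inv_mem σ _ hmem (x + M) (by simp only [Finset.mem_Ico]; omega)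
  simp only [Finset.mem_Ico] at this
  exact this

def stripPerm (M : ℕ) (σ : Equiv.Perm ℕ)
    (h : ∀ x, x < M → M ≤ σ (x + M) ∧ σ (x + M) < 2*M) : Equiv.Perm ℕ where
  toFun x := if x < M then σ (x + M) - M else x
  invFun x := if x < M then σ⁻¹ (x + M) - M else x
  left_inv := by
    intro x
    by_cases hx : x < M
    · obtain ⟨h1, h2⟩ := h x hx
      simp only [if_pos hx, if_pos (show σ (x + M) - M < M by omega)]
      rw [show σ (x + M) - M + M = σ (x + M) by omega, Equiv.Perm.inv_def, Equiv.symm_apply_apply]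
      omega
    · simp only [if_neg hx]
  right_inv := by
    intro x
    by_cases hx : x < M
    · obtain ⟨h1, h2⟩ := strip_inv M σ h x hx
      simp only [if_pos hx, if_pos (show σ⁻¹ (x + M) - M < M by omega)]
      rw [show σ⁻¹ (x + M) - M + M = σ⁻¹ (x + M) by omega, Equiv.Perm.inv_def, Equiv.apply_symm_apply]
      omega
    · simp only [if_neg hx]

@[simp] lemma stripPerm_apply (M : ℕ) (σ : Equiv.Perm ℕ)
    (h : ∀ x, x < M → M ≤ σ (x + M) ∧ σ (x + M) < 2*M) (x : ℕ) :
    stripPerm M σ h x = if x < M then σ (x + M) - M else x := rfl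

def shiftPerm (M : ℕ) (g : Equiv.Perm ℕ) : Equiv.Perm ℕ where
  toFun j := if M ≤ j then g (j - M) + M else j
  invFun j := if M ≤ j then g⁻¹ (j - M) + M else j
  left_inv := by
    intro j
    by_cases hj : M ≤ j
    · simp only [if_pos hj, if_pos (show M ≤ g (j - M) + M by omega)]
      rw [Nat.add_sub_cancel, Equiv.Perm.inv_def, Equiv.symm_apply_apply]
      omega
    · simp only [if_neg hj]
  right_inv := by
    intro j
    by_cases hj : M ≤ j
    · simp only [if_pos hj, if_pos (show M ≤ g⁻¹ (j - M) + M by omega)]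
      rw [Nat.add_sub_cancel, Equiv.Perm.inv_def, Equiv.apply_symm_apply]
      omega
    · simp only [if_neg hj]

@[simp] lemma shiftPerm_apply (M : ℕ) (g : Equiv.Perm ℕ) (j : ℕ) :
    shiftPerm M g j = if M ≤ j then g (j - M) + M else j := rfl

lemma fix_ge_imp_lt (g : Equiv.Perm ℕ) (M : ℕ) (hg : ∀ j, M ≤ j → g j = j) :
    ∀ j, j < M → g j < M := by
  intro j hj
  by_contra hcon
  have h1 : g (g j) = g j := hg _ (by omega)
  have := g.injective h1
  omega

/-! ### the toggle property -/

def Tog (t : ℕ) (f : Equiv.Perm ℕ) : Prop :=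
  ∀ j, f j / 2^t = j / 2^t ∧ f j % 2^(t-1) = j % 2^(t-1)

lemma tog_mul {t : ℕ} {f g : Equiv.Perm ℕ} (hf : Tog t f) (hg : Tog t g) : Tog t (f * g) := by
  intro j
  obtain ⟨h1, h2⟩ := hg j
  obtain ⟨h3, h4⟩ := hf (g j)
  exact ⟨by rw [Equiv.Perm.mul_apply, h3, h1], by rw [Equiv.Perm.mul_apply, h4, h2]⟩

lemma tog_shift {t b : ℕ} (ht : 1 ≤ t) (htb : t ≤ b) {g : Equiv.Perm ℕ} (hg : Tog t g) :
    Tog t (shiftPerm (2^b) g) := by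
  intro j
  rw [shiftPerm_apply]
  by_cases hj : 2^b ≤ j
  · rw [if_pos hj]
    obtain ⟨h1, h2⟩ := hg (j - 2^b)
    have hK : (2:ℕ)^b = 2^t * 2^(b-t) := by rw [← pow_add]; congr 1; omega
    have hK' : (2:ℕ)^b = 2^(t-1) * 2^(b-(t-1)) := by rw [← pow_add]; congr 1; omega
    have hpt : (0:ℕ) < 2^t := Nat.pow_pos (n := t) (by norm_num)
    have hpt' : (0:ℕ) < 2^(t-1) := Nat.pow_pos (by norm_num)
    constructor
    · rw [hK] at hj h1 ⊢
      rw [Nat.add_mul_div_left _ _ hpt, h1]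
      conv_rhs => rw [show j = (j - 2^t * 2^(b-t)) + 2^t * 2^(b-t) by omega]
      rw [Nat.add_mul_div_left _ _ hpt]
    · rw [hK'] at hj h2 ⊢
      rw [Nat.add_mul_mod_self_left, h2]
      conv_rhs => rw [show j = (j - 2^(t-1) * 2^(b-(t-1))) + 2^(t-1) * 2^(b-(t-1)) by omega]
      rw [Nat.add_mul_mod_self_left]
  · rw [if_neg hj]
    exact ⟨rfl, rfl⟩

lemma tog_preserves {t b : ℕ} (htb : t ≤ b) {f : Equiv.Perm ℕ} (hf : Tog t f) :
    ∀ j, j < 2^b → f j < 2^b := by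
  intro j hj
  have h1 := (hf j).1
  have hK : (2:ℕ)^b = 2^t * 2^(b-t) := by rw [← pow_add]; congr 1; omega
  rw [hK] at hj ⊢
  exact lt_of_div_eq h1 hj

lemma comps_preserves {b N : ℕ} {F : ℕ → Equiv.Perm ℕ}
    (h : ∀ t, 1 ≤ t → t ≤ b → ∀ j, j < N → F t j < N) :
    ∀ j, j < N → comps F b j < N := by
  have := comps_rel F F (fun x y => x = y ∧ x < N) b
    (fun t h1 h2 x y hxy => ⟨by rw [hxy.1], h t h1 h2 _ (hxy.1 ▸ hxy.2)⟩)
  intro j hj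
  exact ((this j j ⟨rfl, hj⟩).1 ▸ (this j j ⟨rfl, hj⟩).2)

lemma comps_mod {t0 : ℕ} {F : ℕ → Equiv.Perm ℕ} :
    ∀ b, t0 ≤ b → (∀ t, 1 ≤ t → t ≤ b → Tog t (F t)) →
    ∀ j, comps F b j % 2^t0 = comps F t0 j % 2^t0 := by
  intro b
  induction b with
  | zero =>
    intro h _ j
    obtain rfl : t0 = 0 := by omega
    rfl
  | succ u ih =>
    intro h htog j
    by_cases hu : t0 ≤ u
    · have step : comps F (u+1) j % 2^t0 = comps F u j % 2^t0 := by
        show F (u+1) (comps F u j) % 2^t0 = comps F u j % 2^t0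
        have h2 := (htog (u+1) (by omega) (by omega) (comps F u j)).2
        simp only [Nat.add_sub_cancel] at h2
        exact mod_pres_mono (by omega) h2
      rw [step, ih hu (fun t h1 h2 => htog t h1 (by omega)) j]
    · have : t0 = u + 1 := by omega
      rw [this]

lemma comps_div {t0 : ℕ} {F : ℕ → Equiv.Perm ℕ} :
    ∀ u, u ≤ t0 → (∀ t, 1 ≤ t → t ≤ u → Tog t (F t)) →
    ∀ j, comps F u j / 2^t0 = j / 2^t0 := by
  intro u
  induction u with
  | zero => intro _ _ j; rfl
  | succ v ih =>
    intro h htog j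
    show F (v+1) (comps F v j) / 2^t0 = j / 2^t0
    have h1 := (htog (v+1) (by omega) (by omega) (comps F v j)).1
    rw [div_pres_mono h h1]
    exact ih (by omega) (fun t ha hb => htog t ha (by omega)) j



/-! ### the key factorization lemma (Beneš routing) -/

lemma key : ∀ b : ℕ, ∀ σ : Equiv.Perm ℕ, (∀ j, j < 2^b → σ j < 2^b) →
    ∃ F T : ℕ → Equiv.Perm ℕ,
      (∀ t, 1 ≤ t → t ≤ b → Tog t (F t) ∧ Tog t (T t)) ∧
      (∀ t j, 1 ≤ t → t ≤ b → 2^b ≤ j → F t j = j ∧ T t j = j) ∧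
      (∀ j, j < 2^b → σ (comps T b j) = comps F b j) := by
  intro b
  induction b with
  | zero =>
    intro σ hσ
    refine ⟨fun _ => 1, fun _ => 1, by omega, by omega, ?_⟩
    intro j hj
    have := hσ j hj
    show σ ((1 : Equiv.Perm ℕ) j) = (1 : Equiv.Perm ℕ) j
    simp only [Equiv.Perm.one_apply]
    omega
  | succ b ih =>
    intro σ hσ
    set M := 2^b with hMdef
    have hM : 0 < M := Nat.pow_pos (n := b) (by norm_num)
    have h2M : 2^(b+1) = 2*M := by rw [pow_succ]; ring
    have hσ2 : ∀ j, j < 2*M → σ j < 2*M := by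
      intro j hj; rw [← h2M] at hj ⊢; exact hσ j hj
    obtain ⟨α, β, habm, hfixαβ, hinv, hbot, htop⟩ := split_step M hM σ hσ2
    set σ' := α * (σ * β) with hσ'def
    have hσ'app : ∀ j, σ' j = α (σ (β j)) := by
      intro j; rw [hσ'def]; rfl
    have h0 : ∀ j, j < M → σ' j < M := by
      intro j hj; rw [hσ'app]; exact hbot j hj
    have h1 : ∀ x, x < M → M ≤ σ' (x+M) ∧ σ' (x+M) < 2*M := by
      intro x hx; rw [hσ'app]; exact htop x hx
    set σ0 := restrictPerm M σ' h0 with hσ0def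
    set σ1 := stripPerm M σ' h1 with hσ1def
    have hσ0pres : ∀ j, j < 2^b → σ0 j < 2^b := by
      intro j hj
      rw [hσ0def, restrictPerm_apply, if_pos hj]
      exact h0 j hj
    have hσ1pres : ∀ j, j < 2^b → σ1 j < 2^b := by
      intro j hj
      rw [hσ1def, stripPerm_apply, if_pos hj]
      have := h1 j hj
      omega
    obtain ⟨F0, T0, htog0, hfix0, hcomp0⟩ := ih σ0 hσ0pres
    obtain ⟨F1, T1, htog1, hfix1, hcomp1⟩ := ih σ1 hσ1pres
    set F : ℕ → Equiv.Perm ℕ :=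
      fun t => if t = b+1 then α else shiftPerm M (F1 t) * F0 t with hF
    set T : ℕ → Equiv.Perm ℕ :=
      fun t => if t = b+1 then β else shiftPerm M (T1 t) * T0 t with hT
    have hFb1 : F (b+1) = α := by rw [hF]; simp
    have hTb1 : T (b+1) = β := by rw [hT]; simp
    have hFlow : ∀ t, t ≤ b → F t = shiftPerm M (F1 t) * F0 t := by
      intro t ht; rw [hF]; simp only [if_neg (by omega : ¬ t = b+1)]
    have hTlow : ∀ t, t ≤ b → T t = shiftPerm M (T1 t) * T0 t := by
      intro t ht; rw [hT]; simp only [if_neg (by omega : ¬ t = b+1)]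
    -- fixing and preservation facts for the half families
    have hF0fix : ∀ t, 1 ≤ t → t ≤ b → ∀ j, M ≤ j → F0 t j = j :=
      fun t h1 h2 j hj => (hfix0 t j h1 h2 hj).1
    have hT0fix : ∀ t, 1 ≤ t → t ≤ b → ∀ j, M ≤ j → T0 t j = j :=
      fun t h1 h2 j hj => (hfix0 t j h1 h2 hj).2
    have hF1fix : ∀ t, 1 ≤ t → t ≤ b → ∀ j, M ≤ j → F1 t j = j :=
      fun t h1 h2 j hj => (hfix1 t j h1 h2 hj).1
    have hT1fix : ∀ t, 1 ≤ t → t ≤ b → ∀ j, M ≤ j → T1 t j = j :=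
      fun t h1 h2 j hj => (hfix1 t j h1 h2 hj).2
    have hF0pres : ∀ t, 1 ≤ t → t ≤ b → ∀ j, j < M → F0 t j < M :=
      fun t h1 h2 => fix_ge_imp_lt (F0 t) M (hF0fix t h1 h2)
    have hT0pres : ∀ t, 1 ≤ t → t ≤ b → ∀ j, j < M → T0 t j < M :=
      fun t h1 h2 => fix_ge_imp_lt (T0 t) M (hT0fix t h1 h2)
    have hF1pres : ∀ t, 1 ≤ t → t ≤ b → ∀ j, j < M → F1 t j < M :=
      fun t h1 h2 => fix_ge_imp_lt (F1 t) M (hF1fix t h1 h2)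
    have hT1pres : ∀ t, 1 ≤ t → t ≤ b → ∀ j, j < M → T1 t j < M :=
      fun t h1 h2 => fix_ge_imp_lt (T1 t) M (hT1fix t h1 h2)
    -- behaviour of the combined factors on the two halves
    have hClo : ∀ t, 1 ≤ t → t ≤ b → ∀ j, j < M →
        F t j = F0 t j ∧ T t j = T0 t j := by
      intro t h1t h2t j hj
      rw [hFlow t h2t, hTlow t h2t]
      constructor
      · rw [Equiv.Perm.mul_apply, shiftPerm_apply, if_neg (by have := hF0pres t h1t h2t j hj; omega)]
      · rw [Equiv.Perm.mul_apply, shiftPerm_apply, if_neg (by have := hT0pres t h1t h2t j hj; omega)]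
    have hChi : ∀ t, 1 ≤ t → t ≤ b → ∀ x, x < M →
        F t (x+M) = F1 t x + M ∧ T t (x+M) = T1 t x + M := by
      intro t h1t h2t x hx
      rw [hFlow t h2t, hTlow t h2t]
      constructor
      · rw [Equiv.Perm.mul_apply, hF0fix t h1t h2t (x+M) (by omega), shiftPerm_apply,
          if_pos (by omega), Nat.add_sub_cancel]
      · rw [Equiv.Perm.mul_apply, hT0fix t h1t h2t (x+M) (by omega), shiftPerm_apply,
          if_pos (by omega), Nat.add_sub_cancel]
    refine ⟨F, T, ?_, ?_, ?_⟩
    · -- toggle property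
      intro t h1t h2t
      by_cases hteq : t = b+1
      · subst hteq
        rw [hFb1, hTb1]
        constructor <;> intro j
        · obtain ⟨d, m, _, _⟩ := habm j
          refine ⟨by rw [h2M]; exact d, ?_⟩
          simpa using m
        · obtain ⟨_, _, d, m⟩ := habm j
          refine ⟨by rw [h2M]; exact d, ?_⟩
          simpa using m
      · have htb : t ≤ b := by omega
        rw [hFlow t htb, hTlow t htb]
        exact ⟨tog_mul (tog_shift h1t htb (htog1 t h1t htb).1) (htog0 t h1t htb).1,
          tog_mul (tog_shift h1t htb (htog1 t h1t htb).2) (htog0 t h1t htb).2⟩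
    · -- fixing above 2^(b+1)
      intro t j h1t h2t hj
      rw [h2M] at hj
      by_cases hteq : t = b+1
      · subst hteq
        rw [hFb1, hTb1]
        exact hfixαβ j hj
      · have htb : t ≤ b := by omega
        rw [hFlow t htb, hTlow t htb]
        constructor
        · rw [Equiv.Perm.mul_apply, hF0fix t h1t htb j (by omega), shiftPerm_apply,
            if_pos (by omega), hF1fix t h1t htb (j - M) (by omega)]
          omega
        · rw [Equiv.Perm.mul_apply, hT0fix t h1t htb j (by omega), shiftPerm_apply,
            if_pos (by omega), hT1fix t h1t htb (j - M) (by omega)]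
          omega
    · -- the composite relation
      have hTcompsLo : ∀ j, j < M → comps T b j = comps T0 b j ∧ comps T0 b j < M := by
        intro j hj
        have := comps_rel T T0 (fun x y => x = y ∧ y < M) b
          (fun t ht1 ht2 x y hxy => by
            obtain ⟨hx, hy⟩ := hxy
            rw [hx]
            exact ⟨(hClo t ht1 ht2 y hy).2, hT0pres t ht1 ht2 y hy⟩) j j ⟨rfl, hj⟩
        exact this
      have hFcompsLo : ∀ j, j < M → comps F b j = comps F0 b j ∧ comps F0 b j < M := by
        intro j hj
        exact comps_rel F F0 (fun x y => x = y ∧ y < M) b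
          (fun t ht1 ht2 x y hxy => by
            obtain ⟨hx, hy⟩ := hxy
            rw [hx]
            exact ⟨(hClo t ht1 ht2 y hy).1, hF0pres t ht1 ht2 y hy⟩) j j ⟨rfl, hj⟩
      have hTcompsHi : ∀ x, x < M → comps T b (x+M) = comps T1 b x + M ∧ comps T1 b x < M := by
        intro x hx
        exact comps_rel T T1 (fun u y => u = y + M ∧ y < M) b
          (fun t ht1 ht2 u y huy => by
            obtain ⟨hu, hy⟩ := huy
            rw [hu]
            exact ⟨(hChi t ht1 ht2 y hy).2, hT1pres t ht1 ht2 y hy⟩) (x+M) x ⟨rfl, hx⟩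
      have hFcompsHi : ∀ x, x < M → comps F b (x+M) = comps F1 b x + M ∧ comps F1 b x < M := by
        intro x hx
        exact comps_rel F F1 (fun u y => u = y + M ∧ y < M) b
          (fun t ht1 ht2 u y huy => by
            obtain ⟨hu, hy⟩ := huy
            rw [hu]
            exact ⟨(hChi t ht1 ht2 y hy).1, hF1pres t ht1 ht2 y hy⟩) (x+M) x ⟨rfl, hx⟩
      intro j hj
      rw [h2M] at hj
      show σ ((T (b+1) * comps T b) j) = (F (b+1) * comps F b) j
      rw [Equiv.Perm.mul_apply, Equiv.Perm.mul_apply, hTb1, hFb1]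
      have hσβ : ∀ x, σ (β x) = α (σ' x) := by
        intro x
        rw [hσ'app x, (hinv (σ (β x))).1]
      rw [hσβ]
      congr 1
      by_cases hjM : j < M
      · obtain ⟨e1, e2⟩ := hTcompsLo j hjM
        rw [e1]
        have hσ'σ0 : σ' (comps T0 b j) = σ0 (comps T0 b j) := by
          rw [hσ0def, restrictPerm_apply, if_pos e2]
        rw [hσ'σ0, hcomp0 j hjM, (hFcompsLo j hjM).1]
      · have hxlt : j - M < M := by omega
        have hjeq : j = (j - M) + M := by omega
        obtain ⟨e1, e2⟩ := hTcompsHi (j - M) hxlt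
        rw [hjeq, e1]
        have hstep : σ' (comps T1 b (j - M) + M) = σ1 (comps T1 b (j - M)) + M := by
          have hz := h1 (comps T1 b (j - M)) e2
          rw [hσ1def, stripPerm_apply, if_pos e2]
          omega
        rw [hstep, hcomp1 (j - M) hxlt, (hFcompsHi (j - M) hxlt).1]



/-! ### permutation matrices -/

def toMatP (n : ℕ) (f : Equiv.Perm ℕ) : Matrix (Fin n) (Fin n) ℂ :=
  Matrix.of fun i j => if (i : ℕ) = f j.val then 1 else 0

lemma toMatP_apply (n : ℕ) (f : Equiv.Perm ℕ) (i j : Fin n) :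
    toMatP n f i j = if (i : ℕ) = f j.val then 1 else 0 := rfl

lemma toMatP_one (n : ℕ) : toMatP n 1 = 1 := by
  ext i j
  rw [toMatP_apply, Matrix.one_apply]
  simp [Fin.ext_iff]
  congr 1

lemma toMatP_mul (n : ℕ) (f g : Equiv.Perm ℕ) (hg : ∀ j, j < n → g j < n) :
    toMatP n (f * g) = toMatP n f * toMatP n g := by
  ext i j
  rw [Matrix.mul_apply, toMatP_apply]
  have hk0 : g j.val < n := hg j.val j.isLt
  rw [Finset.sum_eq_single (⟨g j.val, hk0⟩ : Fin n)]
  · simp [toMatP_apply, Equiv.Perm.mul_apply]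
    congr 1
  · intro k _ hk
    have h2 : ¬((k : ℕ) = g j.val) := fun hcon => hk (Fin.ext hcon)
    rw [toMatP_apply, toMatP_apply, if_neg h2, mul_zero]
  · intro h
    exact absurd (Finset.mem_univ _) h

lemma toMatP_comps (n : ℕ) (T : ℕ → Equiv.Perm ℕ) :
    ∀ u, (∀ t, 1 ≤ t → t ≤ u → ∀ j, j < n → T t j < n) →
    (List.ofFn fun t : Fin u => toMatP n (T (u - t.val))).prod = toMatP n (comps T u) := by
  intro u
  induction u with
  | zero =>
    intro _
    simp only [List.ofFn_zero, List.prod_nil]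
    exact (toMatP_one n).symm
  | succ v ih =>
    intro hpres
    rw [List.ofFn_succ]
    simp only [Fin.val_zero, Nat.sub_zero, Fin.val_succ]
    have htail : (fun t : Fin v => toMatP n (T (v + 1 - (t.val + 1)))) =
        (fun t : Fin v => toMatP n (T (v - t.val))) := by
      funext t
      have : v + 1 - (t.val + 1) = v - t.val := by omega
      rw [this]
    rw [List.prod_cons, htail, ih (fun t h1 h2 => hpres t h1 (by omega)),
      show comps T (v+1) = T (v+1) * comps T v from rfl,
      toMatP_mul n (T (v+1)) (comps T v) (comps_preserves (fun t h1 h2 => hpres t h1 (by omega)))]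

/-! ### lifting a `Fin n` permutation to `ℕ` -/

def liftPerm (n : ℕ) (π : Equiv.Perm (Fin n)) : Equiv.Perm ℕ where
  toFun j := if h : j < n then (π ⟨j, h⟩).val else j
  invFun j := if h : j < n then (π.symm ⟨j, h⟩).val else j
  left_inv := by
    intro j
    dsimp only
    by_cases h : j < n
    · rw [dif_pos h, dif_pos (π ⟨j, h⟩).isLt]
      rw [show (⟨(π ⟨j, h⟩).val, (π ⟨j, h⟩).isLt⟩ : Fin n) = π ⟨j, h⟩ from rfl,
        Equiv.symm_apply_apply]
    · rw [dif_neg h, dif_neg h]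
  right_inv := by
    intro j
    dsimp only
    by_cases h : j < n
    · rw [dif_pos h, dif_pos (π.symm ⟨j, h⟩).isLt]
      rw [show (⟨(π.symm ⟨j, h⟩).val, (π.symm ⟨j, h⟩).isLt⟩ : Fin n) = π.symm ⟨j, h⟩ from rfl,
        Equiv.apply_symm_apply]
    · rw [dif_neg h, dif_neg h]

lemma liftPerm_apply_lt (n : ℕ) (π : Equiv.Perm (Fin n)) (j : ℕ) (h : j < n) :
    liftPerm n π j = (π ⟨j, h⟩).val := dif_pos h


end PermDecomp2

end PermDecompAux

open PermDecomp2

/-- Every `n × n` permutation matrix `P` decomposes as `P = L · R` with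
`L` a modular-balanced permutation matrix and `R` the conjugate transpose of a butterfly
matrix. -/
theorem perm_decomposes_modbal_times_Bstar (b n : ℕ) (hn : n = 2 ^ b)
    (P : Matrix (Fin n) (Fin n) ℂ) (hP : IsPermutationMatrix n P) :
    ∃ L R : Matrix (Fin n) (Fin n) ℂ,
      IsPermutationMatrix n L ∧ ModularBalanced n L ∧
      (∃ B : Matrix (Fin n) (Fin n) ℂ, IsButterflyMatrix n B ∧ R = Bᴴ) ∧
      P = L * R := by
  classical
  subst hn
  obtain ⟨σP, hPdef⟩ := hP
  set σ : Equiv.Perm ℕ := liftPerm (2^b) σP with hσdef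
  have hσpres : ∀ j, j < 2^b → σ j < 2^b := by
    intro j hj
    rw [hσdef, liftPerm_apply_lt _ _ j hj]
    exact (σP ⟨j, hj⟩).isLt
  obtain ⟨F, T, htog, hfix, hcomp⟩ := key b σ hσpres
  have htogF : ∀ t, 1 ≤ t → t ≤ b → Tog t (F t) := fun t a c => (htog t a c).1
  have htogT : ∀ t, 1 ≤ t → t ≤ b → Tog t (T t) := fun t a c => (htog t a c).2
  have hlampres : ∀ j, j < 2^b → PermDecomp.comps F b j < 2^b :=
    comps_preserves (fun t h1 h2 => tog_preserves h2 (htogF t h1 h2))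
  have htaupres : ∀ j, j < 2^b → PermDecomp.comps T b j < 2^b :=
    comps_preserves (fun t h1 h2 => tog_preserves h2 (htogT t h1 h2))
  set lam := PermDecomp.comps F b with hlamdef
  set tau := PermDecomp.comps T b with htaudef
  set L := toMatP (2^b) lam with hL
  set B := toMatP (2^b) tau with hB
  refine ⟨L, Bᴴ, ?_, ?_, ⟨B, ?_, rfl⟩, ?_⟩
  · -- L is a permutation matrix
    refine ⟨⟨fun i => ⟨lam i.val, hlampres _ i.isLt⟩,
      fun i => ⟨lam⁻¹ i.val, PermDecomp.perm_inv_lt _ _ hlampres _ i.isLt⟩, ?_, ?_⟩, ?_⟩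
    · intro i
      apply Fin.ext
      simp
    · intro i
      apply Fin.ext
      simp
    · intro i j
      rw [hL, toMatP_apply]
      by_cases h : (i : ℕ) = lam j.val
      · rw [if_pos h, if_pos (Fin.ext h)]
      · rw [if_neg h, if_neg (fun hc => h (congrArg Fin.val hc))]
  · -- L is modular balanced
    intro t h1t hle
    have htb : t ≤ b := by
      by_contra hcon
      push_neg at hcon
      have := Nat.pow_lt_pow_right (by norm_num : (1:ℕ) < 2) hcon
      omega
    intro c hc m hm
    have spos : 0 < 2^t := Nat.pow_pos (n := t) (by norm_num)
    have hdivn : (2:ℕ)^b / 2^t = 2^(b-t) := Nat.pow_div htb (by norm_num)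
    rw [hdivn] at hc
    have hns : (2:ℕ)^b = 2^t * 2^(b-t) := by rw [← pow_add]; congr 1; omega
    have hLne : ∀ i j : Fin (2^b), L i j ≠ 0 ↔ (i : ℕ) = lam j.val := by
      intro i j
      rw [hL, toMatP_apply]
      by_cases h : (i : ℕ) = lam j.val <;> simp [h]
    have hinj : ∀ j k : Fin (2^b), (j : ℕ) / 2^t = c → (k : ℕ) / 2^t = c →
        lam j.val % 2^t = lam k.val % 2^t → j = k := by
      intro j k hj hk he
      have hmodj := PermDecomp2.comps_mod (t0 := t) (F := F) b htb htogF j.val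
      have hmodk := PermDecomp2.comps_mod (t0 := t) (F := F) b htb htogF k.val
      have hdivj := PermDecomp2.comps_div (t0 := t) (F := F) t le_rfl
        (fun u hu1 hu2 => htogF u hu1 (by omega)) j.val
      have hdivk := PermDecomp2.comps_div (t0 := t) (F := F) t le_rfl
        (fun u hu1 hu2 => htogF u hu1 (by omega)) k.val
      have heq : PermDecomp.comps F t j.val = PermDecomp.comps F t k.val := by
        apply PermDecomp.eq_of_div_mod (2^t)
        · rw [hdivj, hdivk, hj, hk]
        · rw [hlamdef] at he
          rw [← hmodj, ← hmodk]
          exact he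
      exact Fin.ext ((PermDecomp.comps F t).injective heq)
    have hmem : ∀ r : ℕ, r < 2^t → c * 2^t + r < 2^b := by
      intro r hr
      have h1 : c + 1 ≤ 2^(b-t) := hc
      calc c * 2^t + r < (c+1) * 2^t := by nlinarith
        _ ≤ 2^(b-t) * 2^t := Nat.mul_le_mul_right _ h1
        _ = 2^b := by rw [mul_comm, ← hns]
    have hchunkdiv : ∀ r : ℕ, r < 2^t → (c * 2^t + r) / 2^t = c := by
      intro r hr
      rw [show c * 2^t + r = 2^t * c + r by ring]
      exact PermDecomp.dm_div _ _ _ spos hr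
    -- the map r ↦ lam (c·2^t + r) mod 2^t is injective on Fin (2^t), hence surjective
    have hψinj : Function.Injective (fun r : Fin (2^t) =>
        (⟨lam (c * 2^t + r.val) % 2^t, Nat.mod_lt _ spos⟩ : Fin (2^t))) := by
      intro r r' hrr
      have h1 : lam (c * 2^t + r.val) % 2^t = lam (c * 2^t + r'.val) % 2^t := by
        simpa using congrArg Fin.val hrr
      have h2 := hinj ⟨c * 2^t + r.val, hmem _ r.isLt⟩ ⟨c * 2^t + r'.val, hmem _ r'.isLt⟩
        (hchunkdiv _ r.isLt) (hchunkdiv _ r'.isLt) h1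
      have := congrArg Fin.val h2
      simp only at this
      exact Fin.ext (by omega)
    have hψsurj := Finite.injective_iff_surjective.mp hψinj
    obtain ⟨r0, hr0⟩ := hψsurj ⟨m, hm⟩
    set j0 : Fin (2^b) := ⟨c * 2^t + r0.val, hmem _ r0.isLt⟩ with hj0def
    have hj0 : (j0 : ℕ) / 2^t = c ∧ lam j0.val % 2^t = m := by
      refine ⟨hchunkdiv _ r0.isLt, ?_⟩
      have := congrArg Fin.val hr0
      simpa using this
    have hseteq : {j : Fin (2^b) | (j : ℕ) / 2^t = c ∧
        ∃ i : Fin (2^b), L i j ≠ 0 ∧ (i : ℕ) % 2^t = m} = {j0} := by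
      ext j
      simp only [Set.mem_setOf_eq, Set.mem_singleton_iff]
      constructor
      · rintro ⟨h1, i, h2, h3⟩
        rw [hLne] at h2
        exact hinj j j0 h1 hj0.1 (by rw [← h2, h3, hj0.2])
      · rintro rfl
        exact ⟨hj0.1, ⟨⟨lam j0.val, hlampres _ j0.isLt⟩, (hLne _ _).mpr rfl, hj0.2⟩⟩
    rw [hseteq, Set.ncard_singleton]
  · -- B is a butterfly matrix
    refine ⟨b, rfl, fun t => toMatP (2^b) (T t), ?_, ?_⟩
    · intro t h1t h2t
      refine ⟨?_, pow_dvd_pow 2 h2t, ?_⟩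
      · have : (2:ℕ)^1 ≤ 2^t := Nat.pow_le_pow_right (by norm_num) h1t
        simpa using this
      · intro i j hne
        dsimp only at hne
        rw [toMatP_apply] at hne
        have hij : (i : ℕ) = T t j.val := by
          by_contra hcon
          rw [if_neg hcon] at hne
          exact hne rfl
        obtain ⟨hd, hmm⟩ := htogT t h1t h2t j.val
        have h2t2 : (2:ℕ)^t / 2 = 2^(t-1) := by
          have := Nat.pow_div h1t (show 0 < 2 by norm_num)
          simpa using this
        rw [hij, h2t2]
        exact ⟨hd, hmm⟩
    · have := toMatP_comps (2^b) T b (fun t h1 h2 => tog_preserves h2 (htogT t h1 h2))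
      rw [hB, htaudef, ← this]
  · -- P = L · Bᴴ
    ext i j
    rw [Matrix.mul_apply]
    have hBH : ∀ k : Fin (2^b), Bᴴ k j = if (j : ℕ) = tau k.val then 1 else 0 := by
      intro k
      rw [Matrix.conjTranspose_apply, hB, toMatP_apply]
      split <;> simp
    set k0 : Fin (2^b) := ⟨tau⁻¹ j.val, PermDecomp.perm_inv_lt _ _ htaupres _ j.isLt⟩ with hk0
    have htauk0 : tau k0.val = j.val := by
      rw [hk0]
      exact Equiv.apply_symm_apply tau j.val
    rw [Finset.sum_eq_single k0]
    · rw [hBH, hL, toMatP_apply, if_pos htauk0.symm, mul_one, hPdef i j]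
      have hrel : lam k0.val = (σP j).val := by
        have h1 := hcomp k0.val k0.isLt
        rw [htauk0] at h1
        rw [← h1, hσdef, liftPerm_apply_lt _ _ _ j.isLt]
      by_cases h : (i : ℕ) = lam k0.val
      · rw [if_pos h, if_pos (Fin.ext (by rw [h, hrel]))]
      · rw [if_neg h, if_neg (fun hc => h (by rw [congrArg Fin.val hc, ← hrel]))]
    · intro k _ hk
      rw [hBH, if_neg, mul_zero]
      intro hc
      apply hk
      apply Fin.ext
      have : tau⁻¹ j.val = k.val := by rw [hc, Equiv.Perm.inv_def, Equiv.symm_apply_apply]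
      rw [hk0]
      exact this.symm
    · intro h
      exact absurd (Finset.mem_univ _) h
end
end

section
/- Let n be a power of 2 and let P be an n × n permutation matrix over ℂ. Then P ∈ B*B; that is, there exist butterfly matrices M1, M2 of size n such that P = M1* · M2. -/
noncomputable section

open Matrix

namespace BStarBAux

open Equiv Matrix

def Fix (n : ℕ) (μ : Equiv.Perm ℕ) : Prop := ∀ x, n ≤ x → μ x = x

-- (stage-1 lemmas assumed; recompiled together later)
lemma Fix.lt {n : ℕ} {μ : Equiv.Perm ℕ} (h : Fix n μ) {x : ℕ} (hx : x < n) : μ x < n := by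
  by_contra hc
  push_neg at hc
  have h2 := h (μ x) hc
  have := μ.injective h2
  omega

lemma Fix.mul {n : ℕ} {μ ν : Equiv.Perm ℕ} (h : Fix n μ) (h' : Fix n ν) : Fix n (μ * ν) := by
  intro x hx
  simp [Equiv.Perm.mul_apply, h' x hx, h x hx]

lemma Fix.inv {n : ℕ} {μ : Equiv.Perm ℕ} (h : Fix n μ) : Fix n μ⁻¹ := by
  intro x hx
  have h2 : μ x = x := h x hx
  conv_lhs => rw [← h2]
  simp

lemma even_odd (x : ℕ) : (∃ q, x = 2 * q) ∨ (∃ q, x = 2 * q + 1) := by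
  rcases Nat.even_or_odd x with ⟨q, hq⟩ | ⟨q, hq⟩
  · exact Or.inl ⟨q, by omega⟩
  · exact Or.inr ⟨q, by omega⟩

def ilFun (f g : ℕ → ℕ) (x : ℕ) : ℕ :=
  2 * (if x % 2 = 0 then f (x / 2) else g (x / 2)) + x % 2

lemma ilFun_even (f g : ℕ → ℕ) (q : ℕ) : ilFun f g (2 * q) = 2 * f q := by
  rw [ilFun, show 2 * q % 2 = 0 by omega, show 2 * q / 2 = q by omega]; simp

lemma ilFun_odd (f g : ℕ → ℕ) (q : ℕ) : ilFun f g (2 * q + 1) = 2 * g q + 1 := by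
  rw [ilFun, show (2 * q + 1) % 2 = 1 by omega, show (2 * q + 1) / 2 = q by omega]; simp

lemma ilFun_inv (f g : Equiv.Perm ℕ) (x : ℕ) :
    ilFun f.symm g.symm (ilFun f g x) = x := by
  rcases even_odd x with ⟨q, rfl⟩ | ⟨q, rfl⟩
  · rw [ilFun_even, ilFun_even, Equiv.symm_apply_apply]
  · rw [ilFun_odd, ilFun_odd, Equiv.symm_apply_apply]

def il (f g : Equiv.Perm ℕ) : Equiv.Perm ℕ where
  toFun := ilFun f g
  invFun := ilFun f.symm g.symm
  left_inv := ilFun_inv f g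
  right_inv := by
    intro x
    have := ilFun_inv f.symm g.symm x
    simpa using this

lemma il_even (f g : Equiv.Perm ℕ) (q : ℕ) : il f g (2 * q) = 2 * f q := ilFun_even f g q

lemma il_odd (f g : Equiv.Perm ℕ) (q : ℕ) : il f g (2 * q + 1) = 2 * g q + 1 := ilFun_odd f g q

lemma il_fix {m : ℕ} {f g : Equiv.Perm ℕ} (hf : Fix m f) (hg : Fix m g) :
    Fix (2 * m) (il f g) := by
  intro x hx
  rcases even_odd x with ⟨q, rfl⟩ | ⟨q, rfl⟩
  · rw [il_even, hf q (by omega)]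
  · rw [il_odd, hg q (by omega)]

lemma bij_of_parts {m : ℕ} {f : ℕ → ℕ} (h1 : ∀ x, m ≤ x → f x = x)
    (h2 : ∀ x, x < m → f x < m)
    (h3 : ∀ x y, x < m → y < m → f x = f y → x = y) : Function.Bijective f := by
  have hinj : Function.Injective f := by
    intro x y hxy
    rcases lt_or_ge x m with hx | hx <;> rcases lt_or_ge y m with hy | hy
    · exact h3 x y hx hy hxy
    · exfalso; have := h2 x hx; rw [hxy, h1 y hy] at this; omega
    · exfalso; have := h2 y hy; rw [← hxy, h1 x hx] at this; omega
    · rw [h1 x hx, h1 y hy] at hxy; exact hxy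
  refine ⟨hinj, fun y => ?_⟩
  rcases lt_or_ge y m with hy | hy
  · have hs : Function.Surjective (fun p : Fin m => (⟨f p, h2 p p.isLt⟩ : Fin m)) := by
      have : Function.Injective (fun p : Fin m => (⟨f p, h2 p p.isLt⟩ : Fin m)) := by
        intro a b hab
        simp only [Fin.mk.injEq] at hab
        exact Fin.ext (h3 a b a.isLt b.isLt hab)
      exact Finite.surjective_of_injective this
    obtain ⟨p, hp⟩ := hs ⟨y, hy⟩
    exact ⟨p, by simpa [Fin.ext_iff] using hp⟩
  · exact ⟨y, h1 y hy⟩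

lemma routing (m : ℕ) (σ : Equiv.Perm ℕ) (hσ : Fix (2 * m) σ) :
    ∃ π ρ τ0 τ1 : Equiv.Perm ℕ,
      (∀ x, π x / 2 = x / 2) ∧ Fix (2 * m) π ∧
      (∀ x, ρ x / 2 = x / 2) ∧ Fix (2 * m) ρ ∧
      Fix m τ0 ∧ Fix m τ1 ∧ σ = π * il τ0 τ1 * ρ := by
  classical
  set tt : Fin m → Finset ℕ := fun p => {σ (2 * p) / 2, σ (2 * p + 1) / 2} with htt
  have hall : ∀ s : Finset (Fin m), s.card ≤ (s.biUnion tt).card := by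
    intro s
    set W : Finset ℕ := s.biUnion (fun p => {2 * (p : ℕ), 2 * (p : ℕ) + 1}) with hW
    set V : Finset ℕ := (s.biUnion tt).biUnion (fun q => {2 * q, 2 * q + 1}) with hV
    have hWcard : W.card = 2 * s.card := by
      rw [hW, Finset.card_biUnion]
      · rw [Finset.sum_congr rfl (g := fun _ => 2)
          (fun p _ => by rw [Finset.card_insert_of_notMem (by simp), Finset.card_singleton])]
        rw [Finset.sum_const, smul_eq_mul]
        ring
      · intro a _ b _ hab
        have hab' : (a : ℕ) ≠ (b : ℕ) := fun h => hab (Fin.ext h)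
        rw [Function.onFun_apply, Finset.disjoint_left]
        intro x hx hx'
        simp only [Finset.mem_insert, Finset.mem_singleton] at hx hx'
        omega
    have hVcard : V.card ≤ (s.biUnion tt).card * 2 :=
      Finset.card_biUnion_le_card_mul _ _ _
        (fun q _ => (Finset.card_insert_le _ _).trans (by simp))
    have hmap : ∀ x ∈ W, σ x ∈ V := by
      intro x hx
      simp only [hW, Finset.mem_biUnion, Finset.mem_insert, Finset.mem_singleton] at hx
      obtain ⟨p, hp, hxp⟩ := hx
      have hq : σ x / 2 ∈ s.biUnion tt := by
        rw [Finset.mem_biUnion]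
        refine ⟨p, hp, ?_⟩
        simp only [htt, Finset.mem_insert, Finset.mem_singleton]
        rcases hxp with rfl | rfl
        · left; rfl
        · right; rfl
      exact Finset.mem_biUnion.mpr
        ⟨σ x / 2, hq, by simp only [Finset.mem_insert, Finset.mem_singleton]; omega⟩
    have hle : W.card ≤ V.card :=
      Finset.card_le_card_of_injOn σ hmap (σ.injective.injOn)
    omega
  obtain ⟨f, hfinj, hft⟩ := (Finset.all_card_le_biUnion_card_iff_exists_injective tt).mp hall
  set c : ℕ → ℕ := fun p => if h : p < m then (if f ⟨p, h⟩ = σ (2 * p) / 2 then 0 else 1) else 0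
    with hc
  set ρf : ℕ → ℕ := fun x => if x / 2 < m ∧ c (x / 2) = 1 then 2 * (x / 2) + 1 - x % 2 else x
    with hρf
  have hρinv : Function.Involutive ρf := by
    intro x
    simp only [hρf]
    by_cases h : x / 2 < m ∧ c (x / 2) = 1
    · rw [if_pos h]
      have e1 : (2 * (x / 2) + 1 - x % 2) / 2 = x / 2 := by omega
      rw [e1, if_pos h]
      omega
    · rw [if_neg h, if_neg h]
  set ρ : Equiv.Perm ℕ := Function.Involutive.toPerm ρf hρinv with hρ
  have hρ_apply : ∀ x, ρ x = ρf x := fun x => rfl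
  have hρ2 : ∀ x, ρ x / 2 = x / 2 := by
    intro x
    rw [hρ_apply]
    simp only [hρf]
    split <;> omega
  have hρfix : Fix (2 * m) ρ := by
    intro x hx
    rw [hρ_apply]
    simp only [hρf]
    rw [if_neg (by omega)]
  set φ : Equiv.Perm ℕ := σ * ρ with hφ
  have hφ_apply : ∀ x, φ x = σ (ρf x) := fun x => rfl
  have hφfix : Fix (2 * m) φ := hσ.mul hρfix
  set fh : ℕ → ℕ := fun p => φ (2 * p) / 2 with hfh
  set gh : ℕ → ℕ := fun p => φ (2 * p + 1) / 2 with hgh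
  have hfh_eq : ∀ (p : ℕ) (h : p < m), fh p = f ⟨p, h⟩ := by
    intro p h
    have hq : 2 * p / 2 = p := by omega
    have hmem := hft ⟨p, h⟩
    simp only [htt, Finset.mem_insert, Finset.mem_singleton] at hmem
    by_cases h0 : f ⟨p, h⟩ = σ (2 * p) / 2
    · have hc0 : c p = 0 := by simp only [hc]; rw [dif_pos h, if_pos h0]
      have hr : ρf (2 * p) = 2 * p := by
        simp only [hρf]; rw [if_neg (by rw [hq, hc0]; omega)]
      simp only [hfh]
      rw [hφ_apply, hr, h0]
    · have hc1 : c p = 1 := by simp only [hc]; rw [dif_pos h, if_neg h0]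
      have hr : ρf (2 * p) = 2 * p + 1 := by
        simp only [hρf]; rw [if_pos (by rw [hq]; exact ⟨h, hc1⟩)]
        omega
      simp only [hfh]
      rw [hφ_apply, hr]
      rcases hmem with hm1 | hm2
      · exact absurd (by simpa [hq] using hm1) h0
      · exact (by simpa [hq] using hm2 : f ⟨p, h⟩ = σ (2 * p + 1) / 2).symm
  have hfh_lt : ∀ p, p < m → fh p < m := by
    intro p hp
    have := hφfix.lt (show 2 * p < 2 * m by omega)
    simp only [hfh]
    omega
  have hfh_fix : ∀ p, m ≤ p → fh p = p := by
    intro p hp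
    have hr : ρf (2 * p) = 2 * p := by
      simp only [hρf]; rw [if_neg (by omega)]
    simp only [hfh]
    rw [hφ_apply, hr, hσ _ (by omega)]
    omega
  have hfh_inj : ∀ p q, p < m → q < m → fh p = fh q → p = q := by
    intro p q hp hq he
    rw [hfh_eq p hp, hfh_eq q hq] at he
    have := hfinj he
    simpa [Fin.ext_iff] using this
  have hfh_bij : Function.Bijective fh := bij_of_parts hfh_fix hfh_lt hfh_inj
  have hgh_lt : ∀ p, p < m → gh p < m := by
    intro p hp
    have := hφfix.lt (show 2 * p + 1 < 2 * m by omega)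
    simp only [hgh]
    omega
  have hgh_fix : ∀ p, m ≤ p → gh p = p := by
    intro p hp
    have hr : ρf (2 * p + 1) = 2 * p + 1 := by
      simp only [hρf]; rw [if_neg (by omega)]
    simp only [hgh]
    rw [hφ_apply, hr, hσ _ (by omega)]
    omega
  have hfh_surj : ∀ q, q < m → ∃ p, p < m ∧ fh p = q := by
    intro q hq
    obtain ⟨p, hp⟩ := hfh_bij.2 q
    refine ⟨p, ?_, hp⟩
    rcases lt_or_ge p m with h | h
    · exact h
    · rw [hfh_fix p h] at hp; omega
  have hgh_inj : ∀ p q, p < m → q < m → gh p = gh q → p = q := by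
    intro p q hp hq he
    by_contra hne
    obtain ⟨r, hr, hrq⟩ := hfh_surj (gh p) (hgh_lt p hp)
    have h1 : φ (2 * r) / 2 = gh p := hrq
    have h2 : φ (2 * p + 1) / 2 = gh p := rfl
    have h3 : φ (2 * q + 1) / 2 = gh q := rfl
    have d1 : φ (2 * r) ≠ φ (2 * p + 1) := fun h => by have := φ.injective h; omega
    have d2 : φ (2 * r) ≠ φ (2 * q + 1) := fun h => by have := φ.injective h; omega
    have d3 : φ (2 * p + 1) ≠ φ (2 * q + 1) := fun h => by have := φ.injective h; omega
    omega
  have hgh_bij : Function.Bijective gh := bij_of_parts hgh_fix hgh_lt hgh_inj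
  set τ0 : Equiv.Perm ℕ := Equiv.ofBijective fh hfh_bij with hτ0d
  set τ1 : Equiv.Perm ℕ := Equiv.ofBijective gh hgh_bij with hτ1d
  have hτ0a : ∀ x, τ0 x = fh x := fun _ => rfl
  have hτ1a : ∀ x, τ1 x = gh x := fun _ => rfl
  have hτ0fix : Fix m τ0 := fun x hx => (hτ0a x).trans (hfh_fix x hx)
  have hτ1fix : Fix m τ1 := fun x hx => (hτ1a x).trans (hgh_fix x hx)
  set τ : Equiv.Perm ℕ := il τ0 τ1 with hτd
  have hτφ : ∀ y, τ y / 2 = φ y / 2 := by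
    intro y
    rcases even_odd y with ⟨q, rfl⟩ | ⟨q, rfl⟩
    · rw [hτd, il_even, hτ0a]
      simp only [hfh]
      omega
    · rw [hτd, il_odd, hτ1a]
      simp only [hgh]
      omega
  have hτfix : Fix (2 * m) τ := il_fix hτ0fix hτ1fix
  set π : Equiv.Perm ℕ := φ * τ⁻¹ with hπd
  have hπ2 : ∀ x, π x / 2 = x / 2 := by
    intro x
    have h1 : τ (τ⁻¹ x) = x := τ.apply_symm_apply x
    have h2 : π x = φ (τ⁻¹ x) := rfl
    rw [h2, ← hτφ (τ⁻¹ x), h1]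
  have hπfix : Fix (2 * m) π := hφfix.mul hτfix.inv
  refine ⟨π, ρ, τ0, τ1, hπ2, hπfix, hρ2, hρfix, hτ0fix, hτ1fix, ?_⟩
  ext x
  simp only [Equiv.Perm.mul_apply]
  rw [hπd]
  simp only [Equiv.Perm.mul_apply, ← hτd, Equiv.Perm.inv_def, Equiv.symm_apply_apply]
  rw [hφ_apply, hρ_apply, hρinv x]

lemma il_one : il 1 1 = 1 := by
  ext x
  rcases even_odd x with ⟨q, rfl⟩ | ⟨q, rfl⟩
  · rw [il_even]; rfl
  · rw [il_odd]; rfl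

lemma il_mul (f g f' g' : Equiv.Perm ℕ) : il f g * il f' g' = il (f * f') (g * g') := by
  ext x
  rw [Equiv.Perm.mul_apply]
  rcases even_odd x with ⟨q, rfl⟩ | ⟨q, rfl⟩
  · rw [il_even, il_even, il_even, Equiv.Perm.mul_apply]
  · rw [il_odd, il_odd, il_odd, Equiv.Perm.mul_apply]

lemma il_prod {b : ℕ} (F G : Fin b → Equiv.Perm ℕ) :
    (List.ofFn fun t => il (F t) (G t)).prod = il (List.ofFn F).prod (List.ofFn G).prod := by
  induction b with
  | zero => simp [il_one]
  | succ b ih =>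
    rw [List.ofFn_succ, List.ofFn_succ, List.ofFn_succ, List.prod_cons, List.prod_cons,
      List.prod_cons, ih (fun t => F t.succ) (fun t => G t.succ), il_mul]

/-- `μ` is a valid butterfly-factor permutation for size `n`, block size `2^s`. -/
def GoodP (n s : ℕ) (μ : Equiv.Perm ℕ) : Prop :=
  Fix n μ ∧ (∀ x, μ x / 2 ^ s = x / 2 ^ s) ∧ (∀ x, μ x % 2 ^ (s - 1) = x % 2 ^ (s - 1))

lemma GoodP.inv {n s : ℕ} {μ : Equiv.Perm ℕ} (h : GoodP n s μ) : GoodP n s μ⁻¹ := by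
  refine ⟨h.1.inv, fun x => ?_, fun x => ?_⟩
  · have h2 := h.2.1 (μ⁻¹ x)
    rwa [show μ (μ⁻¹ x) = x from μ.apply_symm_apply x, eq_comm] at h2
  · have h2 := h.2.2 (μ⁻¹ x)
    rwa [show μ (μ⁻¹ x) = x from μ.apply_symm_apply x, eq_comm] at h2

lemma GoodP.pairLocal {n : ℕ} {μ : Equiv.Perm ℕ} (hf : Fix n μ) (h2 : ∀ x, μ x / 2 = x / 2) :
    GoodP n 1 μ :=
  ⟨hf, by simpa using h2, fun x => by simp [Nat.mod_one]⟩

lemma helper_div (a e k : ℕ) (he : e < 2) : (2 * a + e) / 2 ^ (k + 1) = a / 2 ^ k := by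
  have h1 : (2 * a + e) / 2 = a := by omega
  rw [pow_succ, mul_comm (2 ^ k) 2, ← Nat.div_div_eq_div_mul, h1]

lemma helper_mod (a b e k : ℕ) (he : e < 2) (h : a % 2 ^ k = b % 2 ^ k) :
    (2 * a + e) % 2 ^ (k + 1) = (2 * b + e) % 2 ^ (k + 1) := by
  have hK : 0 < 2 ^ k := pow_pos (by norm_num) k
  have key : ∀ y : ℕ, (2 * y + e) % 2 ^ (k + 1) = 2 * (y % 2 ^ k) + e := by
    intro y
    conv_lhs => rw [show y = 2 ^ k * (y / 2 ^ k) + y % 2 ^ k from (Nat.div_add_mod y (2 ^ k)).symm]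
    rw [show 2 * (2 ^ k * (y / 2 ^ k) + y % 2 ^ k) + e
        = 2 ^ (k + 1) * (y / 2 ^ k) + (2 * (y % 2 ^ k) + e) by rw [pow_succ]; ring]
    rw [Nat.mul_add_mod]
    have hy : y % 2 ^ k < 2 ^ k := Nat.mod_lt _ hK
    exact Nat.mod_eq_of_lt (by rw [pow_succ]; omega)
  rw [key a, key b, h]

lemma GoodP.il {m s : ℕ} {f g : Equiv.Perm ℕ} (hs : 1 ≤ s)
    (hf : GoodP m s f) (hg : GoodP m s g) : GoodP (2 * m) (s + 1) (il f g) := by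
  obtain ⟨r, rfl⟩ : ∃ r, s = r + 1 := ⟨s - 1, by omega⟩
  have hfm : ∀ y, f y % 2 ^ r = y % 2 ^ r := by
    have h2 := hf.2.2
    simpa using h2
  have hgm : ∀ y, g y % 2 ^ r = y % 2 ^ r := by
    have h2 := hg.2.2
    simpa using h2
  refine ⟨il_fix hf.1 hg.1, fun x => ?_, fun x => ?_⟩
  · rcases even_odd x with ⟨q, rfl⟩ | ⟨q, rfl⟩
    · rw [il_even, show (2 * f q : ℕ) = 2 * f q + 0 by ring, show (2 * q : ℕ) = 2 * q + 0 by ring,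
        helper_div _ _ _ (by omega), helper_div _ _ _ (by omega), hf.2.1 q]
    · rw [il_odd, helper_div _ _ _ (by omega), helper_div _ _ _ (by omega), hg.2.1 q]
  · simp only [Nat.add_sub_cancel]
    rcases even_odd x with ⟨q, rfl⟩ | ⟨q, rfl⟩
    · rw [il_even, show (2 * f q : ℕ) = 2 * f q + 0 by ring, show (2 * q : ℕ) = 2 * q + 0 by ring]
      exact helper_mod _ _ _ _ (by omega) (hfm q)
    · rw [il_odd]
      exact helper_mod _ _ _ _ (by omega) (hgm q)

theorem core (b : ℕ) : ∀ σ : Equiv.Perm ℕ, Fix (2 ^ b) σ →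
    ∃ δ ε : ℕ → Equiv.Perm ℕ,
      (∀ t, 1 ≤ t → t ≤ b → GoodP (2 ^ b) t (δ t) ∧ GoodP (2 ^ b) t (ε t)) ∧
      (List.ofFn fun i : Fin b => δ (b - i.val)).prod * σ
        = (List.ofFn fun i : Fin b => ε (b - i.val)).prod := by
  induction b with
  | zero =>
    intro σ hσ
    refine ⟨fun _ => 1, fun _ => 1, fun t h1 h2 => (by omega : False).elim, ?_⟩
    have hσ1 : σ = 1 := by
      ext x
      rcases Nat.eq_zero_or_pos x with rfl | hx
      · by_contra h0
        simp only [Equiv.Perm.one_apply] at h0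
        have h2 := hσ (σ 0) (by simp at h0 ⊢; omega)
        exact h0 (σ.injective h2)
      · simpa using hσ x (by rw [pow_zero]; omega)
    simp [hσ1]
  | succ b ih =>
    intro σ hσ
    have h2m : (2 : ℕ) ^ (b + 1) = 2 * 2 ^ b := by rw [pow_succ]; ring
    obtain ⟨π, ρ, τ0, τ1, hπ2, hπfix, hρ2, hρfix, hτ0fix, hτ1fix, hfact⟩ :=
      routing (2 ^ b) σ (by rwa [← h2m])
    obtain ⟨δ0, ε0, hg0, he0⟩ := ih τ0 hτ0fix
    obtain ⟨δ1, ε1, hg1, he1⟩ := ih τ1 hτ1fix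
    set δ : ℕ → Equiv.Perm ℕ := fun t => if t ≤ 1 then π⁻¹ else il (δ0 (t - 1)) (δ1 (t - 1))
      with hδ
    set ε : ℕ → Equiv.Perm ℕ := fun t => if t ≤ 1 then ρ else il (ε0 (t - 1)) (ε1 (t - 1))
      with hε
    have hπfix' : Fix (2 ^ (b + 1)) π := by rwa [h2m]
    have hρfix' : Fix (2 ^ (b + 1)) ρ := by rwa [h2m]
    refine ⟨δ, ε, ?_, ?_⟩
    · intro t h1 h2
      rcases Nat.lt_or_ge 1 t with ht | ht
      · obtain ⟨u, rfl⟩ : ∃ u, t = u + 1 := ⟨t - 1, by omega⟩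
        have hu1 : 1 ≤ u := by omega
        have hu2 : u ≤ b := by omega
        constructor
        · show GoodP (2 ^ (b + 1)) (u + 1) (if u + 1 ≤ 1 then π⁻¹ else il (δ0 u) (δ1 u))
          rw [if_neg (by omega), h2m]
          exact GoodP.il hu1 (hg0 u hu1 hu2).1 (hg1 u hu1 hu2).1
        · show GoodP (2 ^ (b + 1)) (u + 1) (if u + 1 ≤ 1 then ρ else il (ε0 u) (ε1 u))
          rw [if_neg (by omega), h2m]
          exact GoodP.il hu1 (hg0 u hu1 hu2).2 (hg1 u hu1 hu2).2
      · have ht1 : t = 1 := by omega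
        subst ht1
        constructor
        · show GoodP (2 ^ (b + 1)) 1 (if (1 : ℕ) ≤ 1 then π⁻¹ else il (δ0 0) (δ1 0))
          rw [if_pos le_rfl]
          exact (GoodP.pairLocal hπfix' hπ2).inv
        · show GoodP (2 ^ (b + 1)) 1 (if (1 : ℕ) ≤ 1 then ρ else il (ε0 0) (ε1 0))
          rw [if_pos le_rfl]
          exact GoodP.pairLocal hρfix' hρ2
    · have hsplit : ∀ γ : ℕ → Equiv.Perm ℕ,
          (List.ofFn fun i : Fin (b + 1) => γ (b + 1 - i.val)).prod
            = (List.ofFn fun i : Fin b => γ (b + 1 - i.val)).prod * γ 1 := by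
        intro γ
        rw [List.ofFn_succ']
        rw [List.concat_eq_append, List.prod_append, List.prod_singleton]
        simp [Fin.coe_castSucc, Fin.val_last]
      rw [hsplit δ, hsplit ε]
      have hδ1 : δ 1 = π⁻¹ := by simp [hδ]
      have hε1 : ε 1 = ρ := by simp [hε]
      have hδrest : (List.ofFn fun i : Fin b => δ (b + 1 - i.val)).prod
          = il (List.ofFn fun i : Fin b => δ0 (b - i.val)).prod
              (List.ofFn fun i : Fin b => δ1 (b - i.val)).prod := by
        rw [← il_prod]
        congr 1
        apply congrArg List.ofFn
        funext i
        simp only [hδ]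
        have hi : ¬ (b + 1 - i.val ≤ 1) := by omega
        rw [if_neg hi, show b + 1 - i.val - 1 = b - i.val by omega]
      have hεrest : (List.ofFn fun i : Fin b => ε (b + 1 - i.val)).prod
          = il (List.ofFn fun i : Fin b => ε0 (b - i.val)).prod
              (List.ofFn fun i : Fin b => ε1 (b - i.val)).prod := by
        rw [← il_prod]
        congr 1
        apply congrArg List.ofFn
        funext i
        simp only [hε]
        have hi : ¬ (b + 1 - i.val ≤ 1) := by omega
        rw [if_neg hi, show b + 1 - i.val - 1 = b - i.val by omega]
      rw [hδrest, hεrest, hδ1, hε1, hfact]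
      rw [show ∀ a p t r : Equiv.Perm ℕ, a * p⁻¹ * (p * t * r) = a * t * r from
        fun a p t r => by group]
      rw [il_mul, he0, he1]

lemma Fix.one (n : ℕ) : Fix n 1 := fun _ _ => rfl

lemma Fix.listProd {n : ℕ} (l : List (Equiv.Perm ℕ)) (h : ∀ μ ∈ l, Fix n μ) :
    Fix n l.prod := by
  induction l with
  | nil => simpa using Fix.one n
  | cons a l ih =>
    rw [List.prod_cons]
    exact (h a (by simp)).mul (ih fun μ hμ => h μ (by simp [hμ]))

/-- permutation matrix of an `ℕ`-permutation -/
def pmat (n : ℕ) (μ : Equiv.Perm ℕ) : Matrix (Fin n) (Fin n) ℂ :=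
  Matrix.of fun i j => if (i : ℕ) = μ (j : ℕ) then 1 else 0

lemma pmat_apply {n : ℕ} {μ : Equiv.Perm ℕ} (i j : Fin n) :
    pmat n μ i j = if (i : ℕ) = μ (j : ℕ) then 1 else 0 := rfl

lemma pmat_one {n : ℕ} : pmat n 1 = 1 := by
  ext i j
  rw [pmat_apply, Matrix.one_apply]
  simp [Fin.val_inj]

lemma pmat_mul {n : ℕ} {μ ν : Equiv.Perm ℕ} (hν : Fix n ν) :
    pmat n μ * pmat n ν = pmat n (μ * ν) := by
  ext i j
  rw [Matrix.mul_apply]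
  have hj : ν (j : ℕ) < n := hν.lt j.isLt
  rw [Finset.sum_eq_single (⟨ν (j : ℕ), hj⟩ : Fin n)]
  · simp [pmat_apply, Equiv.Perm.mul_apply]
    exact if_congr Iff.rfl rfl rfl
  · intro k _ hk
    have hk' : ¬ ((k : ℕ) = ν (j : ℕ)) := fun h => hk (Fin.ext h)
    rw [pmat_apply k j, if_neg hk', mul_zero]
  · intro h
    exact absurd (Finset.mem_univ _) h

lemma pmat_conjT {n : ℕ} {μ : Equiv.Perm ℕ} : (pmat n μ)ᴴ = pmat n μ⁻¹ := by
  ext i j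
  rw [Matrix.conjTranspose_apply, pmat_apply, pmat_apply]
  have hiff : (j : ℕ) = μ (i : ℕ) ↔ (i : ℕ) = μ⁻¹ (j : ℕ) := by
    constructor
    · intro h; rw [h]; simp
    · intro h; rw [h]; simp
  by_cases h : (j : ℕ) = μ (i : ℕ)
  · rw [if_pos h, if_pos (hiff.mp h)]; simp
  · rw [if_neg h, if_neg (fun hh => h (hiff.mpr hh))]; simp

lemma pmat_prod {n : ℕ} (l : List (Equiv.Perm ℕ)) (h : ∀ μ ∈ l, Fix n μ) :
    (l.map (pmat n)).prod = pmat n l.prod := by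
  induction l with
  | nil => simp [pmat_one]
  | cons a l ih =>
    rw [List.map_cons, List.prod_cons, List.prod_cons,
      ih (fun μ hμ => h μ (by simp [hμ])),
      pmat_mul (Fix.listProd l (fun μ hμ => h μ (by simp [hμ])))]

/-- extend a permutation of `Fin n` to `ℕ` -/
def extendPerm (n : ℕ) (σ : Equiv.Perm (Fin n)) : Equiv.Perm ℕ where
  toFun x := if h : x < n then (σ ⟨x, h⟩ : ℕ) else x
  invFun x := if h : x < n then (σ.symm ⟨x, h⟩ : ℕ) else x
  left_inv := by
    intro x
    dsimp only
    by_cases h : x < n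
    · rw [dif_pos h, dif_pos (σ ⟨x, h⟩).isLt]
      simp
    · rw [dif_neg h, dif_neg h]
  right_inv := by
    intro x
    dsimp only
    by_cases h : x < n
    · rw [dif_pos h, dif_pos (σ.symm ⟨x, h⟩).isLt]
      simp
    · rw [dif_neg h, dif_neg h]

lemma extendPerm_fix (n : ℕ) (σ : Equiv.Perm (Fin n)) : Fix n (extendPerm n σ) :=
  fun _ hx => dif_neg (by omega)

lemma extendPerm_apply (n : ℕ) (σ : Equiv.Perm (Fin n)) (j : Fin n) :
    extendPerm n σ (j : ℕ) = (σ j : ℕ) := by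
  show (if h : (j : ℕ) < n then (σ ⟨(j : ℕ), h⟩ : ℕ) else (j : ℕ)) = (σ j : ℕ)
  rw [dif_pos j.isLt]

end BStarBAux

/-- Every `n × n` permutation matrix (`n` a power of 2) is in `B*B`. -/
theorem permutation_in_BStarB (b n : ℕ) (hn : n = 2 ^ b)
    (P : Matrix (Fin n) (Fin n) ℂ) (hP : IsPermutationMatrix n P) :
    ∃ M1 M2 : Matrix (Fin n) (Fin n) ℂ,
      IsButterflyMatrix n M1 ∧ IsButterflyMatrix n M2 ∧ P = M1ᴴ * M2 := by
  obtain ⟨σ, hPσ⟩ := hP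
  subst hn
  obtain ⟨δ, ε, hGood, hEq⟩ := BStarBAux.core b (BStarBAux.extendPerm (2 ^ b) σ)
    (BStarBAux.extendPerm_fix (2 ^ b) σ)
  have key : ∀ γ : ℕ → Equiv.Perm ℕ,
      (∀ t, 1 ≤ t → t ≤ b → BStarBAux.GoodP (2 ^ b) t (γ t)) →
      IsButterflyMatrix (2 ^ b)
        (BStarBAux.pmat (2 ^ b) (List.ofFn fun i : Fin b => γ (b - i.val)).prod) := by
    intro γ hγ
    refine ⟨b, rfl, fun t => BStarBAux.pmat (2 ^ b) (γ t), ?_, ?_⟩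
    · intro t h1 h2
      have hg := hγ t h1 h2
      refine ⟨?_, pow_dvd_pow 2 h2, ?_⟩
      · calc (2 : ℕ) = 2 ^ 1 := (pow_one 2).symm
          _ ≤ 2 ^ t := Nat.pow_le_pow_right (by norm_num) h1
      · intro i j hij
        dsimp only at hij
        have hij' : (i : ℕ) = γ t (j : ℕ) := by
          by_contra hc
          rw [BStarBAux.pmat_apply, if_neg hc] at hij
          exact hij rfl
        have ht2 : 2 ^ t / 2 = 2 ^ (t - 1) := by
          obtain ⟨u, rfl⟩ : ∃ u, t = u + 1 := ⟨t - 1, by omega⟩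
          rw [pow_succ, Nat.add_sub_cancel, Nat.mul_div_cancel _ (by norm_num)]
        rw [hij', ht2]
        exact ⟨hg.2.1 j, hg.2.2 j⟩
    · have hmap : (List.ofFn fun t : Fin b => BStarBAux.pmat (2 ^ b) (γ (b - t.val)))
          = (List.ofFn fun t : Fin b => γ (b - t.val)).map (BStarBAux.pmat (2 ^ b)) := by
        rw [List.map_ofFn]
        rfl
      rw [hmap, BStarBAux.pmat_prod]
      intro μ hμ
      obtain ⟨i, hi⟩ := List.mem_ofFn.mp hμ
      have hlt := i.isLt
      exact hi ▸ ((hγ (b - i.val) (by omega) (by omega)).1 : BStarBAux.Fix _ _)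
  have hfixlist : ∀ γ : ℕ → Equiv.Perm ℕ,
      (∀ t, 1 ≤ t → t ≤ b → BStarBAux.GoodP (2 ^ b) t (γ t)) →
      BStarBAux.Fix (2 ^ b) (List.ofFn fun i : Fin b => γ (b - i.val)).prod := by
    intro γ hγ
    apply BStarBAux.Fix.listProd
    intro μ hμ
    obtain ⟨i, hi⟩ := List.mem_ofFn.mp hμ
    have hlt := i.isLt
    exact hi ▸ (hγ (b - i.val) (by omega) (by omega)).1
  refine ⟨BStarBAux.pmat (2 ^ b) (List.ofFn fun i : Fin b => δ (b - i.val)).prod,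
    BStarBAux.pmat (2 ^ b) (List.ofFn fun i : Fin b => ε (b - i.val)).prod,
    key δ (fun t h1 h2 => (hGood t h1 h2).1),
    key ε (fun t h1 h2 => (hGood t h1 h2).2), ?_⟩
  have hEfix := hfixlist ε (fun t h1 h2 => (hGood t h1 h2).2)
  rw [BStarBAux.pmat_conjT, BStarBAux.pmat_mul hEfix]
  have hσ' : ((List.ofFn fun i : Fin b => δ (b - i.val)).prod)⁻¹
      * (List.ofFn fun i : Fin b => ε (b - i.val)).prod = BStarBAux.extendPerm (2 ^ b) σ := by
    rw [← hEq, inv_mul_cancel_left]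
  rw [hσ']
  ext i j
  rw [hPσ i j, BStarBAux.pmat_apply, BStarBAux.extendPerm_apply]
  by_cases h : i = σ j
  · rw [if_pos h, if_pos (congrArg Fin.val h)]
  · rw [if_neg h, if_neg (fun hh => h (Fin.ext hh))]
end
end

section
/- Let n be a power of 2, let P_br be the n × n bit-reversal permutation matrix, and let M1 be any butterfly matrix of size n over ℂ. Then there exists a butterfly matrix M2 of size n such that M1* = P_br · M2 · P_br. -/
noncomputable section

open Matrix

/-- a sum of bits is less than `2^b` -/
lemma bitsum_lt (b : ℕ) (c : ℕ → ℕ) (hc : ∀ t, c t ≤ 1) :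
    ∑ t ∈ Finset.range b, c t * 2 ^ t < 2 ^ b := by
  induction b with
  | zero => simp
  | succ b ih =>
    rw [Finset.sum_range_succ, pow_succ]
    have h1 : c b * 2 ^ b ≤ 1 * 2 ^ b := Nat.mul_le_mul_right _ (hc b)
    omega

lemma bitsum_digit (b s : ℕ) (hs : s < b) (c : ℕ → ℕ) (hc : ∀ t, c t ≤ 1) :
    (∑ t ∈ Finset.range b, c t * 2 ^ t) / 2 ^ s % 2 = c s := by
  have hsb : s ≤ b := hs.le
  have hsplit : ∑ t ∈ Finset.range b, c t * 2 ^ t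
      = (∑ t ∈ Finset.range s, c t * 2 ^ t) + ∑ t ∈ Finset.Ico s b, c t * 2 ^ t := by
    rw [Finset.range_eq_Ico,
      ← Finset.sum_Ico_consecutive _ (Nat.zero_le s) hsb, ← Finset.range_eq_Ico]
  have hre : ∑ t ∈ Finset.Ico s b, c t * 2 ^ t
      = 2 ^ s * ∑ u ∈ Finset.range (b - s), c (s + u) * 2 ^ u := by
    rw [Finset.sum_Ico_eq_sum_range, Finset.mul_sum]
    apply Finset.sum_congr rfl
    intro u _
    rw [pow_add]; ring
  have hL : (∑ t ∈ Finset.range s, c t * 2 ^ t) < 2 ^ s := bitsum_lt s c hc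
  rw [hsplit, hre, Nat.add_mul_div_left _ _ (Nat.pow_pos (n := s) (by norm_num : (0:ℕ) < 2)),
    Nat.div_eq_of_lt hL, Nat.zero_add]
  have hbs : b - s = (b - s - 1) + 1 := by omega
  rw [hbs, Finset.sum_range_succ']
  simp only [pow_succ, Nat.add_zero, pow_zero, mul_one]
  have : ∑ u ∈ Finset.range (b - s - 1), c (s + (u + 1)) * (2 ^ u * 2)
      = 2 * ∑ u ∈ Finset.range (b - s - 1), c (s + (u + 1)) * 2 ^ u := by
    rw [Finset.mul_sum]; apply Finset.sum_congr rfl; intros; ring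
  rw [this, Nat.add_comm, Nat.add_mul_mod_self_left, Nat.mod_eq_of_lt (by have := hc s; omega)]

lemma bit_le_one (x u : ℕ) : x / 2 ^ u % 2 ≤ 1 := by omega

lemma bitRev_eq_sum (b x : ℕ) :
    bitRev b x = ∑ t ∈ Finset.range b, (x / 2 ^ (b - 1 - t) % 2) * 2 ^ t := by
  unfold bitRev
  rw [← Finset.sum_range_reflect]
  apply Finset.sum_congr rfl
  intro t ht
  rw [Finset.mem_range] at ht
  rw [show b - 1 - (b - 1 - t) = t by omega]

lemma bitRev_lt (b x : ℕ) : bitRev b x < 2 ^ b := by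
  rw [bitRev_eq_sum]
  exact bitsum_lt b _ fun t => bit_le_one x _

lemma testBit_bitRev (b x u : ℕ) (hu : u < b) :
    (bitRev b x).testBit u = x.testBit (b - 1 - u) := by
  rw [Nat.testBit_eq_decide_div_mod_eq, Nat.testBit_eq_decide_div_mod_eq, bitRev_eq_sum,
    bitsum_digit b u hu _ fun t => bit_le_one x _]

lemma bitRev_bitRev (b x : ℕ) (hx : x < 2 ^ b) : bitRev b (bitRev b x) = x := by
  apply Nat.eq_of_testBit_eq
  intro u
  by_cases hu : u < b
  · rw [testBit_bitRev _ _ _ hu, testBit_bitRev _ _ _ (by omega),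
      show b - 1 - (b - 1 - u) = u by omega]
  · have h2 : 2 ^ b ≤ 2 ^ u := Nat.pow_le_pow_right (by norm_num) (by omega)
    rw [Nat.testBit_lt_two_pow (by have := bitRev_lt b (bitRev b x); omega),
      Nat.testBit_lt_two_pow (by omega)]

lemma blockCond_iff (t : ℕ) (ht : 1 ≤ t) (i j : ℕ) :
    (i / 2 ^ t = j / 2 ^ t ∧ i % 2 ^ (t - 1) = j % 2 ^ (t - 1)) ↔
      ∀ u, u ≠ t - 1 → i.testBit u = j.testBit u := by
  constructor
  · rintro ⟨hd, hm⟩ u hu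
    rcases lt_or_ge u (t - 1) with h | h
    · have : (i % 2 ^ (t - 1)).testBit u = (j % 2 ^ (t - 1)).testBit u := by rw [hm]
      simpa [Nat.testBit_mod_two_pow, h] using this
    · have h' : t ≤ u := by omega
      have : (i / 2 ^ t).testBit (u - t) = (j / 2 ^ t).testBit (u - t) := by rw [hd]
      rw [← Nat.shiftRight_eq_div_pow, ← Nat.shiftRight_eq_div_pow,
        Nat.testBit_shiftRight, Nat.testBit_shiftRight, show t + (u - t) = u by omega] at this
      exact this
  · intro h
    constructor
    · apply Nat.eq_of_testBit_eq
      intro u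
      rw [← Nat.shiftRight_eq_div_pow, ← Nat.shiftRight_eq_div_pow,
        Nat.testBit_shiftRight, Nat.testBit_shiftRight]
      exact h _ (by omega)
    · apply Nat.eq_of_testBit_eq
      intro u
      simp only [Nat.testBit_mod_two_pow]
      by_cases hu : u < t - 1
      · simp [hu, h u (by omega)]
      · simp [hu]

lemma bitRev_blockCond (b t : ℕ) (ht1 : 1 ≤ t) (htb : t ≤ b) (i j : ℕ)
    (h : i / 2 ^ t = j / 2 ^ t ∧ i % 2 ^ (t - 1) = j % 2 ^ (t - 1)) :
    bitRev b i / 2 ^ (b + 1 - t) = bitRev b j / 2 ^ (b + 1 - t) ∧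
      bitRev b i % 2 ^ (b + 1 - t - 1) = bitRev b j % 2 ^ (b + 1 - t - 1) := by
  rw [blockCond_iff t ht1] at h
  rw [blockCond_iff (b + 1 - t) (by omega)]
  intro u hu
  by_cases hub : u < b
  · rw [testBit_bitRev _ _ _ hub, testBit_bitRev _ _ _ hub]
    exact h _ (by omega)
  · have h2 : 2 ^ b ≤ 2 ^ u := Nat.pow_le_pow_right (by norm_num) (by omega)
    rw [Nat.testBit_lt_two_pow (by have := bitRev_lt b i; omega),
      Nat.testBit_lt_two_pow (by have := bitRev_lt b j; omega)]

lemma ofFn_reverse {α : Type*} {m : ℕ} (f : Fin m → α) :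
    (List.ofFn f).reverse = List.ofFn (fun t => f t.rev) := by
  apply List.ext_getElem
  · simp
  · intro i h1 h2
    simp only [List.getElem_reverse, List.getElem_ofFn, List.length_reverse,
      List.length_ofFn] at *
    congr 1
    apply Fin.ext
    simp [Fin.rev]
    omega

lemma conj_prod {n : ℕ} (P : Matrix (Fin n) (Fin n) ℂ) (hP : P * P = 1) :
    ∀ L : List (Matrix (Fin n) (Fin n) ℂ),
      P * L.prod * P = (L.map fun A => P * A * P).prod := by
  intro L
  induction L with
  | nil => simp [hP]
  | cons A L ih =>
    rw [List.map_cons, List.prod_cons, List.prod_cons, ← ih]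
    simp only [Matrix.mul_assoc]
    rw [← Matrix.mul_assoc P P, hP, Matrix.one_mul]

lemma two_pow_div_two (m : ℕ) (hm : 1 ≤ m) : 2 ^ m / 2 = 2 ^ (m - 1) := by
  obtain ⟨k, rfl⟩ := Nat.exists_eq_add_of_le hm
  rw [show 1 + k - 1 = k by omega, pow_add, pow_one, Nat.mul_div_cancel_left _ (by norm_num)]


/-- For the `n × n` bit-reversal permutation matrix `P_br` and any
butterfly matrix `M1` of size `n = 2^b`, there is a butterfly matrix `M2` with
`M1ᴴ = P_br · M2 · P_br`. -/
theorem conjTranspose_butterfly_bitrev (b n : ℕ) (hn : n = 2 ^ b)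
    (M1 : Matrix (Fin n) (Fin n) ℂ) (hM1 : IsButterflyMatrix n M1)
    (Pbr : Matrix (Fin n) (Fin n) ℂ)
    (hPbr : ∀ i j : Fin n, Pbr i j = if i.val = bitRev b j.val then 1 else 0) :
    ∃ M2 : Matrix (Fin n) (Fin n) ℂ,
      IsButterflyMatrix n M2 ∧ M1ᴴ = Pbr * M2 * Pbr := by
  -- the bit-reversal as a map on `Fin n`
  set σ : Fin n → Fin n := fun i => ⟨bitRev b i.val, lt_of_lt_of_le (bitRev_lt b i.val) (le_of_eq hn.symm)⟩
    with hσ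
  have hσσ : ∀ i, σ (σ i) = i := by
    intro i
    apply Fin.ext
    exact bitRev_bitRev b i.val (by rw [← hn]; exact i.isLt)
  have hPbr' : ∀ i j : Fin n, Pbr i j = if i = σ j then 1 else 0 := by
    intro i j
    rw [hPbr]
    congr 1
    simp [hσ, Fin.ext_iff]
  have hmulL : ∀ (A : Matrix (Fin n) (Fin n) ℂ) i j, (Pbr * A) i j = A (σ i) j := by
    intro A i j
    rw [Matrix.mul_apply, Finset.sum_eq_single (σ i)]
    · rw [hPbr', if_pos (hσσ i).symm, one_mul]
    · intro k _ hk
      rw [hPbr', if_neg, zero_mul]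
      intro he
      exact hk (by rw [he, hσσ])
    · intro h
      exact absurd (Finset.mem_univ _) h
  have hmulR : ∀ (A : Matrix (Fin n) (Fin n) ℂ) i j, (A * Pbr) i j = A i (σ j) := by
    intro A i j
    rw [Matrix.mul_apply, Finset.sum_eq_single (σ j)]
    · rw [hPbr', if_pos rfl, mul_one]
    · intro k _ hk
      rw [hPbr', if_neg hk, mul_zero]
    · intro h
      exact absurd (Finset.mem_univ _) h
  have hconj : ∀ (A : Matrix (Fin n) (Fin n) ℂ) i j, (Pbr * A * Pbr) i j = A (σ i) (σ j) := by
    intro A i j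
    rw [hmulR, hmulL]
  have hPP : Pbr * Pbr = 1 := by
    ext i j
    rw [hmulL, hPbr', Matrix.one_apply]
    by_cases h : i = j
    · simp [h]
    · have : σ i ≠ σ j := fun he => h (by rw [← hσσ i, he, hσσ])
      simp [h, this]
  obtain ⟨b', hb', B, hB, hM⟩ := hM1
  have hbb : b = b' := (Nat.pow_right_injective (le_refl 2) (hb'.symm.trans hn)).symm
  subst hbb
  refine ⟨Pbr * M1ᴴ * Pbr, ⟨b, hn, fun s => Pbr * (B (b + 1 - s))ᴴ * Pbr, ?_, ?_⟩, ?_⟩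
  · -- each factor is a butterfly factor matrix
    intro t ht1 htb
    set t' := b + 1 - t with ht'
    have ht'1 : 1 ≤ t' := by omega
    have ht'b : t' ≤ b := by omega
    obtain ⟨-, -, hsupp⟩ := hB t' ht'1 ht'b
    refine ⟨by
      calc (2:ℕ) = 2 ^ 1 := rfl
      _ ≤ 2 ^ t := Nat.pow_le_pow_right (by norm_num) ht1,
      by rw [hn]; exact pow_dvd_pow 2 htb, ?_⟩
    intro i j hne
    have hne2 : (B t')ᴴ (σ i) (σ j) ≠ 0 := hconj (B t')ᴴ i j ▸ hne
    have hB0 : B t' (σ j) (σ i) ≠ 0 := by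
      intro h0
      apply hne2
      rw [Matrix.conjTranspose_apply, h0, star_zero]
    have hcond := hsupp _ _ hB0
    have hhalf : 2 ^ t' / 2 = 2 ^ (t' - 1) := two_pow_div_two t' ht'1
    rw [hhalf] at hcond
    have := bitRev_blockCond b t' ht'1 ht'b (σ j).val (σ i).val hcond
    rw [show (bitRev b (σ j).val) = j.val from congrArg Fin.val (hσσ j),
      show (bitRev b (σ i).val) = i.val from congrArg Fin.val (hσσ i)] at this
    rw [show b + 1 - t' = t by omega] at this
    have hhalf2 : 2 ^ t / 2 = 2 ^ (t - 1) := two_pow_div_two t ht1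
    rw [hhalf2]
    exact ⟨this.1.symm, this.2.symm⟩
  · -- product formula
    rw [hM, Matrix.conjTranspose_list_prod, List.map_ofFn, ofFn_reverse, conj_prod Pbr hPP,
      List.map_ofFn]
    refine congrArg List.prod (congrArg List.ofFn (funext fun t => ?_))
    simp only [Function.comp_apply]
    have h1 : (t.rev : ℕ) = b - 1 - t.val := by rw [Fin.val_rev]; omega
    have h2 : b - (b - 1 - t.val) = b + 1 - (b - t.val) := by have := t.isLt; omega
    rw [h1, h2]
  · -- the identity `M1ᴴ = Pbr * (Pbr * M1ᴴ * Pbr) * Pbr`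
    simp only [Matrix.mul_assoc]
    rw [hPP, Matrix.mul_one, ← Matrix.mul_assoc, hPP, Matrix.one_mul]
end
end

section
/- Let n be a power of 2 and let A, B be n × n matrices over ℂ with A ∈ (BB*)^{w1}_e and B ∈ (BB*)^{w2}_e. Then A·B ∈ (BB*)^{w1+w2}_e. -/
noncomputable section

open Matrix

lemma prod_ofFn_mul_last {M : Type*} [Monoid M] (m : ℕ) (f : Fin (m + 1) → M) (X : M) :
    (List.ofFn fun i : Fin (m + 1) => if i.val = m then f i * X else f i).prod
      = (List.ofFn f).prod * X := by
  rw [List.ofFn_succ', List.ofFn_succ', List.prod_concat, List.prod_concat]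
  have h2 : (List.ofFn fun i : Fin m =>
      if (i.castSucc : ℕ) = m then f i.castSucc * X else f i.castSucc)
      = List.ofFn fun i : Fin m => f i.castSucc := by
    refine congrArg List.ofFn (funext fun i => ?_)
    simp [Nat.ne_of_lt i.isLt]
  rw [h2]
  simp [mul_assoc]

lemma diag_mul_butterfly {N : ℕ} (d : Fin N → ℂ) (M : Matrix (Fin N) (Fin N) ℂ)
    (hd1 : N = 1 → ∀ i, d i = 1) (hM : IsButterflyMatrix N M) :
    IsButterflyMatrix N (Matrix.diagonal d * M) := by
  obtain ⟨b, hb, Bf, hBf, hprod⟩ := hM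
  rcases Nat.eq_zero_or_pos b with hb0 | hbpos
  · subst hb0
    have hN : N = 1 := by simpa using hb
    have hdiag : Matrix.diagonal d = 1 := by
      ext i j
      by_cases h : i = j
      · subst h; simp [Matrix.diagonal, hd1 hN i, Matrix.one_apply]
      · simp [Matrix.diagonal_apply_ne _ h, Matrix.one_apply_ne h]
    rw [hdiag, one_mul]
    exact ⟨0, hb, Bf, hBf, hprod⟩
  · obtain ⟨m, rfl⟩ : ∃ m, b = m + 1 := ⟨b - 1, by omega⟩
    refine ⟨m + 1, hb, fun t => if t = m + 1 then Matrix.diagonal d * Bf (m + 1) else Bf t,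
      ?_, ?_⟩
    · intro t h1 h2
      dsimp only
      by_cases ht : t = m + 1
      · subst ht
        rw [if_pos rfl]
        obtain ⟨hk2, hkd, hcond⟩ := hBf (m + 1) (by omega) le_rfl
        refine ⟨hk2, hkd, fun i j hij => ?_⟩
        apply hcond
        intro h0
        apply hij
        rw [Matrix.diagonal_mul, h0, mul_zero]
      · rw [if_neg ht]; exact hBf t h1 h2
    · rw [hprod, List.ofFn_succ, List.ofFn_succ, List.prod_cons, List.prod_cons, ← mul_assoc]
      have htail : (List.ofFn fun i : Fin m =>
          (fun t => if t = m + 1 then Matrix.diagonal d * Bf (m + 1) else Bf t)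
            (m + 1 - (i.succ : ℕ)))
          = List.ofFn fun i : Fin m => Bf (m + 1 - (i.succ : ℕ)) := by
        refine congrArg List.ofFn (funext fun i => ?_)
        dsimp only
        rw [if_neg (by simp [Fin.val_succ]; omega)]
      rw [htail]
      have h0 : m + 1 - ((0 : Fin (m + 1)) : ℕ) = m + 1 := by simp
      rw [h0]
      dsimp only
      rw [if_pos rfl]

/-- If `A ∈ (BB*)^{w1}_e` and `B ∈ (BB*)^{w2}_e` then
`A·B ∈ (BB*)^{w1+w2}_e`. -/
theorem BBStar_product_closure (b n w1 w2 e : ℕ) (hn : n = 2 ^ b)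
    (A B : Matrix (Fin n) (Fin n) ℂ)
    (hA : InBBStarPowExp n w1 e A) (hB : InBBStarPowExp n w2 e B) :
    InBBStarPowExp n (w1 + w2) e (A * B) := by
  have hnpos : 0 < n := by rw [hn]; positivity
  rcases Nat.eq_zero_or_pos e with rfl | hepos
  · -- `e = 0`: the corner condition is vacuous.
    rcases Nat.eq_zero_or_pos w1 with rfl | hw1
    · rcases Nat.eq_zero_or_pos w2 with rfl | hw2
      · exact ⟨1, ⟨Fin.elim0, fun i => i.elim0, by simp⟩,
          fun i j hi hj => absurd hi (by omega)⟩
      · obtain ⟨E2, ⟨g, hg, -⟩, -⟩ := hB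
        obtain ⟨M1, M2, ⟨b', hb', -⟩, -, -⟩ := hg ⟨0, hw2⟩
        rw [Nat.zero_mul] at hb'
        exact absurd hb'.symm (pow_pos two_pos b').ne'
    · obtain ⟨E1, ⟨f, hf, -⟩, -⟩ := hA
      obtain ⟨M1, M2, ⟨b', hb', -⟩, -, -⟩ := hf ⟨0, hw1⟩
      rw [Nat.zero_mul] at hb'
      exact absurd hb'.symm (pow_pos two_pos b').ne'
  have hnN : n ≤ e * n := Nat.le_mul_of_pos_left n hepos
  rcases Nat.eq_zero_or_pos w1 with rfl | hw1
  · -- `w1 = 0`: then `A = 1`.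
    obtain ⟨E1, ⟨f, hf, hE1⟩, hcA⟩ := hA
    have hE1' : E1 = 1 := by simpa using hE1
    have hA1 : A = 1 := by
      ext i j
      have hi : i.val < e * n := lt_of_lt_of_le i.isLt hnN
      have hj : j.val < e * n := lt_of_lt_of_le j.isLt hnN
      rw [hcA i j hi hj, hE1']
      simp [Matrix.one_apply, Fin.ext_iff]
    rw [hA1, one_mul, Nat.zero_add]
    exact hB
  -- main case: `w1 ≥ 1`.
  obtain ⟨m1, rfl⟩ : ∃ m, w1 = m + 1 := ⟨w1 - 1, by omega⟩
  obtain ⟨E1, ⟨f, hf, hE1⟩, hcA⟩ := hA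
  obtain ⟨E2, ⟨g, hg, hE2⟩, hcB⟩ := hB
  set d : Fin (e * n) → ℂ := fun i => if i.val < n then 1 else 0 with hd
  have hd1 : e * n = 1 → ∀ i : Fin (e * n), d i = 1 := by
    intro h1 i
    have : i.val < n := by omega
    simp [hd, this]
  have hDstar : (Matrix.diagonal d)ᴴ = Matrix.diagonal d := by
    have hds : star d = d := by
      funext i
      simp only [Pi.star_apply, hd]
      by_cases h : (i : ℕ) < n <;> simp [h]
    rw [Matrix.diagonal_conjTranspose, hds]
  -- the modified last factor of `E1`
  set f' : Fin (m1 + 1) → Matrix (Fin (e * n)) (Fin (e * n)) ℂ :=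
    fun i => if i.val = m1 then f i * Matrix.diagonal d else f i with hf'
  have hf'BB : ∀ i, InBBStar (e * n) (f' i) := by
    intro i
    by_cases hi : i.val = m1
    · obtain ⟨M1, M2, hM1, hM2, hfm⟩ := hf i
      refine ⟨M1, Matrix.diagonal d * M2, hM1, diag_mul_butterfly d M2 hd1 hM2, ?_⟩
      rw [hf']
      simp only [if_pos hi]
      rw [hfm, Matrix.conjTranspose_mul, hDstar, ← mul_assoc]
    · rw [hf']
      simp only [if_neg hi]
      exact hf i
  refine ⟨E1 * Matrix.diagonal d * E2, ⟨Fin.append f' g, ?_, ?_⟩, ?_⟩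
  · intro i
    induction i using Fin.addCases with
    | left i => rw [Fin.append_left]; exact hf'BB i
    | right i => rw [Fin.append_right]; exact hg i
  · rw [List.ofFn_add, List.prod_append]
    have h1 : (List.ofFn fun i : Fin (m1 + 1) =>
        Fin.append f' g (Fin.castLE (Nat.le_add_right _ _) i))
        = List.ofFn f' := congrArg List.ofFn (funext fun i => Fin.append_left f' g i)
    have h2 : (List.ofFn fun i : Fin w2 => Fin.append f' g (Fin.natAdd (m1 + 1) i))
        = List.ofFn g := by simp [Fin.append_right]
    rw [h1, h2, hf', prod_ofFn_mul_last, ← hE1, ← hE2]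
  · intro i j hi hj
    rw [Matrix.mul_apply, Matrix.mul_apply]
    have hkn : ∀ k : Fin n, (k : ℕ) < e * n := fun k => lt_of_lt_of_le k.isLt hnN
    set F : ℕ → ℂ := fun k =>
      if hk : k < e * n then
        (if k < n then E1 ⟨i.val, hi⟩ ⟨k, hk⟩ * E2 ⟨k, hk⟩ ⟨j.val, hj⟩ else 0)
      else 0 with hF
    have h1 : ∑ k : Fin n, A i k * B k j = ∑ k ∈ Finset.range n, F k := by
      rw [← Fin.sum_univ_eq_sum_range]
      refine Finset.sum_congr rfl fun k _ => ?_
      rw [hcA i k hi (hkn k), hcB k j (hkn k) hj]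
      simp only [hF]
      rw [dif_pos (hkn k), if_pos k.isLt]
    have h2 : ∑ k ∈ Finset.range n, F k = ∑ k ∈ Finset.range (e * n), F k := by
      refine Finset.sum_subset (Finset.range_subset_range.mpr hnN) fun k _ hk => ?_
      rw [Finset.mem_range, not_lt] at hk
      simp only [hF]
      by_cases h : k < e * n
      · rw [dif_pos h, if_neg (by omega)]
      · rw [dif_neg h]
    have h3 : ∑ k ∈ Finset.range (e * n), F k
        = ∑ K : Fin (e * n),
            (E1 * Matrix.diagonal d) ⟨i.val, hi⟩ K * E2 K ⟨j.val, hj⟩ := by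
      rw [← Fin.sum_univ_eq_sum_range]
      refine Finset.sum_congr rfl fun K _ => ?_
      simp only [hF]
      rw [dif_pos K.isLt, Matrix.mul_diagonal]
      by_cases h : (K : ℕ) < n
      · rw [if_pos h]
        simp [hd, h]
      · rw [if_neg h]
        simp [hd, h]
    rw [h1, h2, h3]
end
end

section
/- Let n be a power of 2 and let M be an invertible n × n butterfly matrix over ℂ. Then M^{−1} is the conjugate transpose of a butterfly matrix; that is, M^{−1} ∈ B*. -/
noncomputable section

open Matrix

/-- Auxiliary: the inverse of an invertible matrix supported on a reflexive transitive
relation is supported on the same relation (finite-dimensional subalgebra argument). -/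
lemma support_inv_aux {n : ℕ} (rel : Fin n → Fin n → Prop)
    (hrefl : ∀ i, rel i i) (htrans : ∀ i j k, rel i j → rel j k → rel i k)
    (B : Matrix (Fin n) (Fin n) ℂ) (hB : ∀ i j, ¬ rel i j → B i j = 0)
    (hU : IsUnit B) : ∀ i j, ¬ rel i j → B⁻¹ i j = 0 := by
  classical
  set S : Submodule ℂ (Matrix (Fin n) (Fin n) ℂ) :=
    { carrier := {A | ∀ i j, ¬ rel i j → A i j = 0}
      add_mem' := fun {A C} hA hC i j h => by
        simp [Matrix.add_apply, hA i j h, hC i j h]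
      zero_mem' := fun i j h => rfl
      smul_mem' := fun c A hA i j h => by
        simp only [Matrix.smul_apply, hA i j h, smul_zero] } with hSdef
  have hmemS : ∀ A : Matrix (Fin n) (Fin n) ℂ,
      A ∈ S ↔ ∀ i j, ¬ rel i j → A i j = 0 := fun A => Iff.rfl
  have hmul : ∀ A : Matrix (Fin n) (Fin n) ℂ, A ∈ S → (B * A) ∈ S := by
    intro A hA
    rw [hmemS] at hA ⊢
    intro i j hij
    rw [Matrix.mul_apply]
    apply Finset.sum_eq_zero
    intro k _
    by_cases hik : rel i k
    · have hkj : ¬ rel k j := fun h => hij (htrans i k j hik h)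
      rw [hA k j hkj, mul_zero]
    · rw [hB i k hik, zero_mul]
  have hone : (1 : Matrix (Fin n) (Fin n) ℂ) ∈ S := by
    rw [hmemS]
    intro i j hij
    have hne : i ≠ j := fun h => hij (h ▸ hrefl i)
    simp [Matrix.one_apply, hne]
  have hdet : IsUnit B.det := (Matrix.isUnit_iff_isUnit_det B).mp hU
  let f : S →ₗ[ℂ] S :=
    { toFun := fun x => ⟨B * x.1, hmul x.1 x.2⟩
      map_add' := fun x y => by
        apply Subtype.ext
        simp [Matrix.mul_add]
      map_smul' := fun c x => by
        apply Subtype.ext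
        simp [Matrix.mul_smul] }
  have hinj : Function.Injective f := by
    intro x y hxy
    have h1 : B * x.1 = B * y.1 := congrArg Subtype.val hxy
    have h2 : B⁻¹ * (B * x.1) = B⁻¹ * (B * y.1) := by rw [h1]
    rw [← Matrix.mul_assoc, ← Matrix.mul_assoc, Matrix.nonsing_inv_mul B hdet,
      Matrix.one_mul, Matrix.one_mul] at h2
    exact Subtype.ext h2
  have hsurj : Function.Surjective f := LinearMap.injective_iff_surjective.mp hinj
  obtain ⟨y, hy⟩ := hsurj ⟨1, hone⟩
  have hy' : B * y.1 = 1 := congrArg Subtype.val hy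
  have hBy : B⁻¹ = y.1 := Matrix.inv_eq_right_inv hy'
  rw [hBy]
  exact y.2

/-- Auxiliary: product of a list of invertible matrices times the reversed list of
inverses is the identity. -/
lemma list_prod_mul_inv_reverse {n : ℕ} (L : List (Matrix (Fin n) (Fin n) ℂ))
    (h : ∀ A ∈ L, IsUnit A) :
    L.prod * ((L.map (fun A => A⁻¹)).reverse.prod) = 1 := by
  induction L with
  | nil => simp
  | cons A L ih =>
    have hA : IsUnit A := h A List.mem_cons_self
    have hL : ∀ X ∈ L, IsUnit X := fun X hX => h X (List.mem_cons_of_mem A hX)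
    have ihL := ih hL
    simp only [List.prod_cons, List.map_cons, List.reverse_cons, List.prod_append,
      List.prod_cons, List.prod_nil, mul_one]
    rw [Matrix.mul_assoc, ← Matrix.mul_assoc L.prod, ihL, Matrix.one_mul,
      Matrix.mul_nonsing_inv A ((Matrix.isUnit_iff_isUnit_det A).mp hA)]

lemma det_list_prod' {n : ℕ} (L : List (Matrix (Fin n) (Fin n) ℂ)) :
    (L.prod).det = (L.map Matrix.det).prod := by
  induction L with
  | nil => simp
  | cons A L ih => simp [Matrix.det_mul, ih]

/-- The inverse of an invertible butterfly matrix is the conjugate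
transpose of a butterfly matrix. -/
theorem butterfly_inverse_in_BStar (b n : ℕ) (hn : n = 2 ^ b)
    (M : Matrix (Fin n) (Fin n) ℂ) (hM : IsButterflyMatrix n M) (hinv : IsUnit M) :
    ∃ B : Matrix (Fin n) (Fin n) ℂ, IsButterflyMatrix n B ∧ M⁻¹ = Bᴴ := by
  classical
  obtain ⟨b', hnb, Bf, hBfac, hMprod⟩ := hM
  set L : List (Matrix (Fin n) (Fin n) ℂ) :=
    List.ofFn (fun t : Fin b' => Bf (b' - t.val)) with hLdef
  have hdetM : IsUnit M.det := (Matrix.isUnit_iff_isUnit_det M).mp hinv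
  -- each element of the list is invertible
  have hunitL : ∀ A ∈ L, IsUnit A := by
    intro A hA
    have hdvd : A.det ∣ M.det := by
      rw [hMprod, det_list_prod']
      exact List.dvd_prod (List.mem_map_of_mem (f := Matrix.det) hA)
    exact (Matrix.isUnit_iff_isUnit_det A).mpr (isUnit_of_dvd_unit hdvd hdetM)
  have hunit : ∀ t, 1 ≤ t → t ≤ b' → IsUnit (Bf t) := by
    intro t ht1 ht2
    apply hunitL
    rw [hLdef, List.mem_ofFn]
    have hlt : b' - t < b' := by omega
    refine ⟨⟨b' - t, hlt⟩, ?_⟩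
    show Bf (b' - (b' - t)) = Bf t
    have heq : b' - (b' - t) = t := by omega
    rw [heq]
  -- the candidate butterfly factors
  set Bf' : ℕ → Matrix (Fin n) (Fin n) ℂ := fun t => ((Bf t)⁻¹)ᴴ with hBf'def
  have hBf'fac : ∀ t, 1 ≤ t → t ≤ b' → IsButterflyFactorMatrix n (2 ^ t) (Bf' t) := by
    intro t ht1 ht2
    obtain ⟨h2k, hdvd, hsupp⟩ := hBfac t ht1 ht2
    refine ⟨h2k, hdvd, ?_⟩
    intro i j hne
    set rel : Fin n → Fin n → Prop := fun i j =>
      i.val / 2 ^ t = j.val / 2 ^ t ∧ i.val % (2 ^ t / 2) = j.val % (2 ^ t / 2) with hreldef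
    have hinv' : ∀ i j, ¬ rel i j → (Bf t)⁻¹ i j = 0 :=
      support_inv_aux rel (fun i => ⟨rfl, rfl⟩)
        (fun i j k hij hjk => ⟨hij.1.trans hjk.1, hij.2.trans hjk.2⟩)
        (Bf t)
        (fun i j h => by
          by_contra hBij
          exact h (hsupp i j hBij))
        (hunit t ht1 ht2)
    have hne' : (Bf t)⁻¹ j i ≠ 0 := by
      intro h0
      apply hne
      simp [hBf'def, Matrix.conjTranspose_apply, h0]
    by_contra hrel
    have : rel j i := by
      by_contra hji
      exact hne' (hinv' j i hji)
    exact hrel ⟨this.1.symm, this.2.symm⟩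
  -- the candidate butterfly matrix
  set Bmat : Matrix (Fin n) (Fin n) ℂ :=
    (List.ofFn fun t : Fin b' => Bf' (b' - t.val)).prod with hBmatdef
  refine ⟨Bmat, ⟨b', hnb, Bf', hBf'fac, rfl⟩, ?_⟩
  -- show M * Bmatᴴ = 1
  have hentry : (conjTranspose ∘ fun t : Fin b' => Bf' (b' - t.val))
      = ((fun A => A⁻¹) ∘ fun t : Fin b' => Bf (b' - t.val)) := by
    funext t
    simp [hBf'def, Function.comp]
  have hBH : Bmatᴴ = (L.map (fun A => A⁻¹)).reverse.prod := by
    rw [hBmatdef, Matrix.conjTranspose_list_prod, hLdef, List.map_ofFn, List.map_ofFn,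
      hentry]
  apply Matrix.inv_eq_right_inv
  rw [hBH, hMprod]
  exact list_prod_mul_inv_reverse L hunitL
end
end
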